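/- arXiv:1506.05679 — 6 statements merged into one kernel-verified Lean document; each statement's English description precedes it below -/
import Mathlib

section
/- If g is an element of GL(4,ℤ) of finite order d, then d belongs to the set {1, 2, 3, 4, 5, 6, 8, 10, 12}. -/
open Polynomial

set_option maxRecDepth 20000 in
lemma aux_lcm_mem : ∀ S ∈ ({1, 2, 3, 4, 5, 6, 8, 10, 12} : Finset ℕ).powerset,
    (∑ e ∈ S, Nat.totient e) ≤ 4 →
    S.lcm id ∈ ({1, 2, 3, 4, 5, 6, 8, 10, 12} : Finset ℕ) := by decide

lemma aux_div120_mem : ∀ e ∈ Nat.divisors 120, Nat.totient e ≤ 4 →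
    e ∈ ({1, 2, 3, 4, 5, 6, 8, 10, 12} : Finset ℕ) := by decide

/-- If `φ e ≤ 4` and `e > 0` then `e ∣ 120`. -/
lemma aux_dvd_120 {e : ℕ} (he : 0 < e) (h : e.totient ≤ 4) : e ∣ 120 := by
  rw [Nat.dvd_iff_prime_pow_dvd_dvd]
  intro p k hp hpk
  rcases Nat.eq_zero_or_pos k with rfl | hk
  · simp
  have hp' : p.Prime := hp
  have h1 : (p ^ k).totient ∣ e.totient := Nat.totient_dvd_of_dvd hpk
  have h2 : (p ^ k).totient ≤ 4 :=
    le_trans (Nat.le_of_dvd (Nat.totient_pos.2 he) h1) h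
  rw [Nat.totient_prime_pow hp' hk] at h2
  have hple : p - 1 ≤ 4 := by
    calc p - 1 ≤ p ^ (k - 1) * (p - 1) :=
          Nat.le_mul_of_pos_left _ (Nat.pow_pos hp'.pos)
      _ ≤ 4 := h2
  have hp2 : 2 ≤ p := hp'.two_le
  have hp5 : p ≤ 5 := by omega
  interval_cases p
  · -- p = 2
    have hk3 : k ≤ 3 := by
      by_contra hc
      push_neg at hc
      have : 2 ^ 3 ≤ 2 ^ (k - 1) := Nat.pow_le_pow_right (by norm_num) (by omega)
      omega
    calc (2:ℕ) ^ k ∣ 2 ^ 3 := pow_dvd_pow 2 hk3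
      _ ∣ 120 := by norm_num
  · -- p = 3
    have hk1 : k ≤ 1 := by
      by_contra hc
      push_neg at hc
      have : 3 ^ 1 ≤ 3 ^ (k - 1) := Nat.pow_le_pow_right (by norm_num) (by omega)
      omega
    calc (3:ℕ) ^ k ∣ 3 ^ 1 := pow_dvd_pow 3 hk1
      _ ∣ 120 := by norm_num
  · exact absurd hp' (by norm_num)
  · -- p = 5
    have hk1 : k ≤ 1 := by
      by_contra hc
      push_neg at hc
      have : 5 ^ 1 ≤ 5 ^ (k - 1) := Nat.pow_le_pow_right (by norm_num) (by omega)
      omega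
    calc (5:ℕ) ^ k ∣ 5 ^ 1 := pow_dvd_pow 5 hk1
      _ ∣ 120 := by norm_num

/-- If `g` is an element of `GL(4, ℤ)` of finite order `d`, then
`d ∈ {1, 2, 3, 4, 5, 6, 8, 10, 12}`. -/
theorem stmt_0 (g : Matrix.GeneralLinearGroup (Fin 4) ℤ) (d : ℕ)
    (hd : orderOf g = d) (hd0 : 0 < d) :
    d ∈ ({1, 2, 3, 4, 5, 6, 8, 10, 12} : Set ℕ) := by
  classical
  -- Move to `GL(4, ℚ)`.
  set f : Matrix (Fin 4) (Fin 4) ℤ →+* Matrix (Fin 4) (Fin 4) ℚ :=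
    (Int.castRingHom ℚ).mapMatrix with hf
  have hfinj : Function.Injective f := by
    intro a b hab
    ext i j
    have := congrFun (congrFun (congrArg Matrix.of (congrArg (fun M => M) hab)) i) j
    simpa [hf, Matrix.map_apply] using congrArg (fun M : Matrix (Fin 4) (Fin 4) ℚ => M i j) hab
  set h : (Matrix (Fin 4) (Fin 4) ℚ)ˣ := Units.map f.toMonoidHom g with hh
  have horder : orderOf h = d := by
    rw [hh, orderOf_injective (Units.map f.toMonoidHom) (Units.map_injective hfinj) g, hd]
  set B : Matrix (Fin 4) (Fin 4) ℚ := (h : Matrix (Fin 4) (Fin 4) ℚ) with hB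
  have hBpow : ∀ k : ℕ, B ^ k = 1 ↔ d ∣ k := by
    intro k
    rw [hB, ← Units.val_pow_eq_pow_val]
    constructor
    · intro hk
      rw [← horder, orderOf_dvd_iff_pow_eq_one]
      exact Units.ext hk
    · intro hk
      rw [← horder, orderOf_dvd_iff_pow_eq_one] at hk
      rw [hk, Units.val_one]
  have hint : IsIntegral ℚ B := ⟨B.charpoly, B.charpoly_monic, B.aeval_self_charpoly⟩
  set μ : ℚ[X] := minpoly ℚ B with hμ
  have hμ0 : μ ≠ 0 := minpoly.ne_zero hint
  have haevalXk : ∀ k : ℕ, aeval B ((X : ℚ[X]) ^ k - 1) = B ^ k - 1 := by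
    intro k; simp
  have hdvd_of_pow : ∀ k : ℕ, B ^ k = 1 → μ ∣ (X : ℚ[X]) ^ k - 1 := by
    intro k hk
    exact minpoly.dvd ℚ B (by rw [haevalXk, hk, sub_self])
  have hpow_of_dvd : ∀ k : ℕ, μ ∣ (X : ℚ[X]) ^ k - 1 → B ^ k = 1 := by
    intro k hk
    obtain ⟨q, hq⟩ := hk
    have : aeval B ((X : ℚ[X]) ^ k - 1) = 0 := by
      rw [hq, map_mul, minpoly.aeval, zero_mul]
    rw [haevalXk, sub_eq_zero] at this
    exact this
  -- the set of cyclotomic factors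
  set S : Finset ℕ := d.divisors.filter (fun e => cyclotomic e ℚ ∣ μ) with hS
  have hScop : (S : Set ℕ).Pairwise (Function.onFun IsCoprime fun e => cyclotomic e ℚ) := by
    intro a _ b _ hab
    exact cyclotomic.isCoprime_rat hab
  have hprodS : (∏ e ∈ S, cyclotomic e ℚ) ∣ μ :=
    Finset.prod_dvd_of_coprime hScop (fun e he => (Finset.mem_filter.1 he).2)
  -- degree bound
  have hμdeg : μ.natDegree ≤ 4 := by
    have h1 : μ ∣ B.charpoly := B.minpoly_dvd_charpoly
    have h2 : B.charpoly.natDegree = 4 := by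
      rw [Matrix.charpoly_natDegree_eq_dim, Fintype.card_fin]
    have h3 : B.charpoly ≠ 0 := B.charpoly_monic.ne_zero
    calc μ.natDegree ≤ B.charpoly.natDegree := Polynomial.natDegree_le_of_dvd h1 h3
      _ = 4 := h2
  have hsum : (∑ e ∈ S, Nat.totient e) ≤ 4 := by
    have hne : ∀ e ∈ S, cyclotomic e ℚ ≠ 0 := fun e _ => cyclotomic_ne_zero e ℚ
    have hdeg : (∏ e ∈ S, cyclotomic e ℚ).natDegree = ∑ e ∈ S, Nat.totient e := by
      rw [Polynomial.natDegree_prod _ _ hne]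
      exact Finset.sum_congr rfl fun e _ => natDegree_cyclotomic e ℚ
    calc (∑ e ∈ S, Nat.totient e) = (∏ e ∈ S, cyclotomic e ℚ).natDegree := hdeg.symm
      _ ≤ μ.natDegree := Polynomial.natDegree_le_of_dvd hprodS hμ0
      _ ≤ 4 := hμdeg
  -- μ divides the product over S
  have hXd : μ ∣ (X : ℚ[X]) ^ d - 1 := hdvd_of_pow d ((hBpow d).2 dvd_rfl)
  have hsplit : (X : ℚ[X]) ^ d - 1 =
      (∏ e ∈ S, cyclotomic e ℚ) *
        ∏ e ∈ d.divisors.filter (fun e => ¬ cyclotomic e ℚ ∣ μ), cyclotomic e ℚ := by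
    rw [hS, Finset.prod_filter_mul_prod_filter_not]
    exact (prod_cyclotomic_eq_X_pow_sub_one hd0 ℚ).symm
  have hcop : IsCoprime μ
      (∏ e ∈ d.divisors.filter (fun e => ¬ cyclotomic e ℚ ∣ μ), cyclotomic e ℚ) := by
    apply IsCoprime.prod_right
    intro e he
    obtain ⟨hed, hnd⟩ := Finset.mem_filter.1 he
    have hepos : 0 < e := Nat.pos_of_mem_divisors hed
    exact ((Irreducible.coprime_iff_not_dvd (cyclotomic.irreducible_rat hepos)).2 hnd).symm
  have hμprodS : μ ∣ ∏ e ∈ S, cyclotomic e ℚ := by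
    apply hcop.dvd_of_dvd_mul_right
    rw [← hsplit]; exact hXd
  -- d = lcm S
  set L : ℕ := S.lcm id with hL
  have hLd : L ∣ d := Finset.lcm_dvd fun e he =>
    (Nat.mem_divisors.1 (Finset.mem_filter.1 he).1).1
  have hprodXL : (∏ e ∈ S, cyclotomic e ℚ) ∣ (X : ℚ[X]) ^ L - 1 := by
    apply Finset.prod_dvd_of_coprime hScop
    intro e he
    have heL : e ∣ L := Finset.dvd_lcm he
    obtain ⟨c, hc⟩ := heL
    calc cyclotomic e ℚ ∣ (X : ℚ[X]) ^ e - 1 := cyclotomic.dvd_X_pow_sub_one e ℚ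
      _ ∣ (X : ℚ[X]) ^ L - 1 := by
          rw [hc, pow_mul]
          simpa using sub_dvd_pow_sub_pow ((X : ℚ[X]) ^ e) 1 c
  have hdL : d ∣ L := (hBpow L).1 (hpow_of_dvd L (hμprodS.trans hprodXL))
  have hdEq : d = L := Nat.dvd_antisymm hdL hLd
  -- combinatorics
  have hSsub : S ⊆ ({1, 2, 3, 4, 5, 6, 8, 10, 12} : Finset ℕ) := by
    intro e he
    have hepos : 0 < e := Nat.pos_of_mem_divisors (Finset.mem_filter.1 he).1
    have hetot : e.totient ≤ 4 :=
      le_trans (Finset.single_le_sum (fun i _ => Nat.zero_le _) he) hsum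
    have he120 : e ∈ Nat.divisors 120 :=
      Nat.mem_divisors.2 ⟨aux_dvd_120 hepos hetot, by norm_num⟩
    exact aux_div120_mem e he120 hetot
  have hmem : L ∈ ({1, 2, 3, 4, 5, 6, 8, 10, 12} : Finset ℕ) :=
    aux_lcm_mem S (Finset.mem_powerset.2 hSsub) hsum
  rw [hdEq]
  simp only [Finset.mem_insert, Finset.mem_singleton] at hmem
  simp only [Set.mem_insert_iff, Set.mem_singleton_iff]
  exact hmem
end

section
/- Let g ∈ GL(4,ℤ) have finite order d, and suppose that the induced automorphism ⋀²g of ⋀²ℤ⁴ has prime order p. Then p ∈ {2, 3, 5} and d ∈ {2, 3, 4, 5, 6, 10}. -/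
set_option synthInstance.maxHeartbeats 1000000
set_option maxHeartbeats 1000000

open ExteriorAlgebra

/-- The image of the `n`-th exterior power under the algebra morphism induced by a linear map
lands in the `n`-th exterior power. -/
lemma map_mem_exteriorPower {R M N : Type*} [CommRing R] [AddCommGroup M] [Module R M]
    [AddCommGroup N] [Module R N] (f : M →ₗ[R] N) (n : ℕ) {x : ExteriorAlgebra R M}
    (hx : x ∈ ⋀[R]^n M) : ExteriorAlgebra.map f x ∈ ⋀[R]^n N := by
  rw [← ExteriorAlgebra.ιMulti_span_fixedDegree] at hx ⊢
  induction hx using Submodule.span_induction with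
  | mem y hy =>
      obtain ⟨m, rfl⟩ := hy
      rw [ExteriorAlgebra.map_apply_ιMulti]
      exact Submodule.subset_span ⟨f ∘ m, rfl⟩
  | zero => simp
  | add a b _ _ ha hb => rw [map_add]; exact Submodule.add_mem _ ha hb
  | smul r a _ ha => rw [map_smul]; exact Submodule.smul_mem _ r ha

/-- The `n`-th exterior power of a linear map. -/
noncomputable def extPowMap {R M N : Type*} [CommRing R] [AddCommGroup M] [Module R M]
    [AddCommGroup N] [Module R N] (n : ℕ) (f : M →ₗ[R] N) : ⋀[R]^n M →ₗ[R] ⋀[R]^n N :=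
  LinearMap.restrict (ExteriorAlgebra.map f).toLinearMap
    (fun _ hx => map_mem_exteriorPower f n hx)

/-! ### Auxiliary lemmas -/

lemma extPowMap_comp' {R M : Type*} [CommRing R] [AddCommGroup M] [Module R M]
    (n : ℕ) (f g : M →ₗ[R] M) :
    extPowMap n (f ∘ₗ g) = (extPowMap n f) ∘ₗ (extPowMap n g) := by
  refine LinearMap.ext fun x => Subtype.ext ?_
  simp only [extPowMap, LinearMap.coe_comp, Function.comp_apply, LinearMap.restrict_apply,
    AlgHom.toLinearMap_apply]
  show ExteriorAlgebra.map (f ∘ₗ g) (x : ExteriorAlgebra R M)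
    = ExteriorAlgebra.map f (ExteriorAlgebra.map g (x : ExteriorAlgebra R M))
  rw [← ExteriorAlgebra.map_comp_map]
  rfl

lemma extPowMap_id' {R M : Type*} [CommRing R] [AddCommGroup M] [Module R M] (n : ℕ) :
    extPowMap n (LinearMap.id : M →ₗ[R] M) = LinearMap.id := by
  refine LinearMap.ext fun x => Subtype.ext ?_
  simp [extPowMap, LinearMap.restrict_apply, ExteriorAlgebra.map_id]

lemma coe_pow_linEquiv {R M : Type*} [CommRing R] [AddCommGroup M] [Module R M]
    (e : M ≃ₗ[R] M) (k : ℕ) :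
    ((e ^ k : M ≃ₗ[R] M) : M →ₗ[R] M) = ((e : M →ₗ[R] M) ^ k) := by
  induction k with
  | zero => rfl
  | succ k ih => rw [pow_succ, pow_succ, ← ih]; rfl

lemma extPowMap_pow' {R M : Type*} [CommRing R] [AddCommGroup M] [Module R M]
    (g : M ≃ₗ[R] M) (k : ℕ) :
    extPowMap 2 ((g ^ k : M ≃ₗ[R] M) : M →ₗ[R] M)
      = (extPowMap 2 (g : M →ₗ[R] M)) ^ k := by
  rw [coe_pow_linEquiv]
  induction k with
  | zero => rw [pow_zero, pow_zero]; exact extPowMap_id' 2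
  | succ k ih =>
      rw [pow_succ, pow_succ, ← ih]
      rw [show ((g : M →ₗ[R] M) ^ k * (g : M →ₗ[R] M))
          = ((g : M →ₗ[R] M) ^ k) ∘ₗ (g : M →ₗ[R] M) from rfl, extPowMap_comp']
      rfl

open Polynomial in
lemma prime_le_five_of_matrix_order (p : ℕ) (hp : p.Prime)
    (M : Matrix (Fin 4) (Fin 4) ℚ) (hMp : M ^ p = 1) (hM1 : M ≠ 1) : p ≤ 5 := by
  haveI : Fact p.Prime := ⟨hp⟩
  have hint : IsIntegral ℚ M := ⟨M.charpoly, M.charpoly_monic, M.aeval_self_charpoly⟩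
  have h0 : (Polynomial.aeval M) (X ^ p - 1 : ℚ[X]) = 0 := by
    simp [hMp]
  have hdvd : minpoly ℚ M ∣ (X ^ p - 1 : ℚ[X]) := minpoly.dvd ℚ M h0
  rw [← Polynomial.cyclotomic_prime_mul_X_sub_one ℚ p] at hdvd
  have hirr : Irreducible (cyclotomic p ℚ) := cyclotomic.irreducible_rat hp.pos
  by_cases hcyc : cyclotomic p ℚ ∣ minpoly ℚ M
  · have hchar : cyclotomic p ℚ ∣ M.charpoly := hcyc.trans (M.minpoly_dvd_charpoly)
    have hne : M.charpoly ≠ 0 := M.charpoly_monic.ne_zero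
    have hle := Polynomial.natDegree_le_of_dvd hchar hne
    rw [Polynomial.natDegree_cyclotomic, Nat.totient_prime hp,
      M.charpoly_natDegree_eq_dim, Fintype.card_fin] at hle
    omega
  · exfalso
    have hcop : IsCoprime (cyclotomic p ℚ) (minpoly ℚ M) :=
      (hirr.coprime_iff_not_dvd).mpr hcyc
    have hdvd2 : minpoly ℚ M ∣ (X - 1 : ℚ[X]) :=
      (hcop.symm).dvd_of_dvd_mul_left hdvd
    have hm1 : (minpoly ℚ M).Monic := minpoly.monic hint
    obtain ⟨q, hq⟩ := hdvd2
    have hmne : minpoly ℚ M ≠ 0 := hm1.ne_zero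
    have hX1 : (X - 1 : ℚ[X]) ≠ 0 := by
      have : (X - 1 : ℚ[X]) = X - C 1 := by simp
      rw [this]
      exact Polynomial.X_sub_C_ne_zero 1
    have hqne : q ≠ 0 := by
      rintro rfl
      rw [mul_zero] at hq
      exact hX1 hq
    have hdegpos : 0 < (minpoly ℚ M).natDegree := minpoly.natDegree_pos hint
    have hdeg : (X - 1 : ℚ[X]).natDegree = 1 := by
      simpa using Polynomial.natDegree_X_sub_C (1 : ℚ)
    have hsum : (minpoly ℚ M).natDegree + q.natDegree = 1 := by
      rw [← Polynomial.natDegree_mul hmne hqne, ← hq, hdeg]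
    have hqdeg : q.natDegree = 0 := by omega
    have hlead : q.leadingCoeff = 1 := by
      have h := congrArg Polynomial.leadingCoeff hq
      rw [Polynomial.leadingCoeff_mul, hm1.leadingCoeff, one_mul] at h
      rw [← h]
      have : (X - 1 : ℚ[X]).Monic := by
        simpa using monic_X_sub_C (1 : ℚ)
      exact this
    have hq1 : q = 1 := by
      have h := Polynomial.eq_C_of_natDegree_eq_zero hqdeg
      rw [h]
      rw [h, Polynomial.leadingCoeff_C] at hlead
      rw [hlead, Polynomial.C_1]
    rw [hq1, mul_one] at hq
    have h : Polynomial.aeval M (X - 1 : ℚ[X]) = 0 := by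
      rw [hq]; exact minpoly.aeval ℚ M
    rw [map_sub, Polynomial.aeval_X, map_one, sub_eq_zero] at h
    exact hM1 h

lemma sq_eq_id_of_extPow (L : (Fin 4 → ℤ) →ₗ[ℤ] (Fin 4 → ℤ))
    (hLid : extPowMap 2 L = LinearMap.id) : L * L = 1 := by
  have hvw : ∀ v w : Fin 4 → ℤ,
      ιMulti ℤ 2 (L ∘ ![v, w]) = ιMulti ℤ 2 ![v, w] := by
    intro v w
    have hmem : ιMulti ℤ 2 ![v, w] ∈ ⋀[ℤ]^2 (Fin 4 → ℤ) := by
      rw [← ExteriorAlgebra.ιMulti_span_fixedDegree]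
      exact Submodule.subset_span ⟨![v, w], rfl⟩
    have h := congrArg Subtype.val (DFunLike.congr_fun hLid ⟨ιMulti ℤ 2 ![v, w], hmem⟩)
    rw [← ExteriorAlgebra.map_apply_ιMulti]; exact h
  have hminor : ∀ (v w : Fin 4 → ℤ) (k l : Fin 4),
      L v k * L w l - L v l * L w k = v k * w l - v l * w k := by
    intro v w k l
    classical
    set F : (Fin 4 → ℤ) [⋀^Fin 2]→ₗ[ℤ] ℤ :=
      (Matrix.detRowAlternating : (Fin 2 → ℤ) [⋀^Fin 2]→ₗ[ℤ] ℤ).compLinearMap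
        (LinearMap.funLeft ℤ ℤ ![k, l]) with hF
    set G : ∀ i, (Fin 4 → ℤ) [⋀^Fin i]→ₗ[ℤ] ℤ :=
      Pi.single (M := fun i => (Fin 4 → ℤ) [⋀^Fin i]→ₗ[ℤ] ℤ) 2 F with hG
    have h := congrArg (ExteriorAlgebra.liftAlternating G) (hvw v w)
    rw [ExteriorAlgebra.liftAlternating_apply_ιMulti,
      ExteriorAlgebra.liftAlternating_apply_ιMulti] at h
    rw [hG, Pi.single_eq_same] at h
    have hFval : ∀ x y : Fin 4 → ℤ, F ![x, y] = x k * y l - x l * y k := by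
      intro x y
      rw [hF, AlternatingMap.compLinearMap_apply]
      rw [show (fun i => (LinearMap.funLeft ℤ ℤ ![k, l]) (![x, y] i))
          = ![x ∘ ![k, l], y ∘ ![k, l]] from by funext i; fin_cases i <;> rfl]
      rw [show (Matrix.detRowAlternating ![x ∘ ![k, l], y ∘ ![k, l]] : ℤ)
          = Matrix.det (Matrix.of ![x ∘ ![k, l], y ∘ ![k, l]]) from rfl]
      rw [Matrix.det_fin_two]
      simp
    rw [show (L ∘ ![v, w]) = ![L v, L w] from by funext i; fin_cases i <;> rfl] at h
    rw [hFval, hFval] at h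
    exact h
  classical
  set a : Fin 4 → Fin 4 → ℤ := fun i j => L (fun j' => if j' = j then 1 else 0) i with ha
  have hM : ∀ i j k l : Fin 4, a k i * a l j - a l i * a k j =
      (if k = i then (1:ℤ) else 0) * (if l = j then 1 else 0)
        - (if l = i then 1 else 0) * (if k = j then 1 else 0) := by
    intro i j k l
    simpa [ha] using
      hminor (fun j' => if j' = i then 1 else 0) (fun j' => if j' = j then 1 else 0) k l
  have hex : ∀ r c : Fin 4, ∃ c', c' ≠ c ∧ c' ≠ r := by decide
  have hoff : ∀ r c : Fin 4, r ≠ c → a r c = 0 := by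
    intro r c hrc
    obtain ⟨c', hc'c, hc'r⟩ := hex r c
    have H1 : a c' c * a r c' - a r c * a c' c' = 0 := by
      simpa [hc'c, hrc, Ne.symm hc'r] using hM c c' c' r
    have H2 : a c c * a r c' - a r c * a c c' = 0 := by
      simpa [hrc, Ne.symm hc'r, Ne.symm hc'c] using hM c c' c r
    have H3 : a c c * a c' c' - a c' c * a c c' = 1 := by
      simpa [hc'c, Ne.symm hc'c] using hM c c' c c'
    linear_combination (-(a c c)) * H1 + (a c' c) * H2 - (a r c) * H3
  have hdiag : ∀ i j : Fin 4, i ≠ j → a i i * a j j = 1 := by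
    intro i j hij
    have h0 := hoff j i (Ne.symm hij)
    simpa [h0, hij, Ne.symm hij] using hM i j i j
  have hex2 : ∀ i : Fin 4, ∃ j k_, j ≠ i ∧ k_ ≠ i ∧ j ≠ k_ := by decide
  have hsq : ∀ i : Fin 4, a i i * a i i = 1 := by
    intro i
    obtain ⟨j, k_, hji, hki, hjk⟩ := hex2 i
    have h1 := hdiag i j (Ne.symm hji)
    have h2 := hdiag i k_ (Ne.symm hki)
    have h3 := hdiag j k_ hjk
    linear_combination (a i i * a k_ k_) * h1 + h2 - (a i i * a i i) * h3
  have z01 : a 0 1 = 0 := hoff 0 1 (by decide)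
  have z02 : a 0 2 = 0 := hoff 0 2 (by decide)
  have z03 : a 0 3 = 0 := hoff 0 3 (by decide)
  have z10 : a 1 0 = 0 := hoff 1 0 (by decide)
  have z12 : a 1 2 = 0 := hoff 1 2 (by decide)
  have z13 : a 1 3 = 0 := hoff 1 3 (by decide)
  have z20 : a 2 0 = 0 := hoff 2 0 (by decide)
  have z21 : a 2 1 = 0 := hoff 2 1 (by decide)
  have z23 : a 2 3 = 0 := hoff 2 3 (by decide)
  have z30 : a 3 0 = 0 := hoff 3 0 (by decide)
  have z31 : a 3 1 = 0 := hoff 3 1 (by decide)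
  have z32 : a 3 2 = 0 := hoff 3 2 (by decide)
  have s0 : a 0 0 * a 0 0 = 1 := hsq 0
  have s1 : a 1 1 * a 1 1 = 1 := hsq 1
  have s2 : a 2 2 * a 2 2 = 1 := hsq 2
  have s3 : a 3 3 * a 3 3 = 1 := hsq 3
  have key : ∀ i j : Fin 4, a i 0 * a 0 j + a i 1 * a 1 j + a i 2 * a 2 j + a i 3 * a 3 j
      = if i = j then (1:ℤ) else 0 := by
    intro i j
    fin_cases i <;> fin_cases j <;>
      simp [z01, z02, z03, z10, z12, z13, z20, z21, z23, z30, z31, z32, s0, s1, s2, s3]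
  have hB : ∀ i j, LinearMap.toMatrix' L i j = a i j := by
    intro i j; rw [LinearMap.toMatrix'_apply]
    exact congrFun (congrArg L (funext fun j' => by simp [Pi.single_apply] :
      (Pi.single j 1 : Fin 4 → ℤ) = fun j' => if j' = j then 1 else 0)) i
  have hBB : LinearMap.toMatrix' L * LinearMap.toMatrix' L = 1 := by
    ext i j
    rw [Matrix.mul_apply, Fin.sum_univ_four, Matrix.one_apply]
    simp only [hB]
    exact key i j
  have hAlg : LinearMap.toMatrixAlgEquiv' (L * L)
      = LinearMap.toMatrixAlgEquiv' (1 : (Fin 4 → ℤ) →ₗ[ℤ] (Fin 4 → ℤ)) := by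
    rw [map_mul, map_one]
    exact hBB
  exact LinearMap.toMatrixAlgEquiv'.injective hAlg

/-- If `g ∈ GL(4, ℤ)` has finite order `d` and the induced automorphism `⋀²g` of `⋀²ℤ⁴` has
prime order `p`, then `p ∈ {2, 3, 5}` and `d ∈ {2, 3, 4, 5, 6, 10}`. -/
theorem stmt_1 (g : (Fin 4 → ℤ) ≃ₗ[ℤ] (Fin 4 → ℤ)) (d p : ℕ)
    (hd : orderOf g = d) (hd0 : 0 < d) (hp : p.Prime)
    (hordp : orderOf (extPowMap 2 (g : (Fin 4 → ℤ) →ₗ[ℤ] (Fin 4 → ℤ))) = p) :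
    p ∈ ({2, 3, 5} : Set ℕ) ∧ d ∈ ({2, 3, 4, 5, 6, 10} : Set ℕ) := by
  have hgd : g ^ d = 1 := by rw [← hd]; exact pow_orderOf_eq_one g
  have hpd : p ∣ d := by
    rw [← hordp]
    apply orderOf_dvd_of_pow_eq_one
    rw [← extPowMap_pow' g d, hgd]
    exact extPowMap_id' 2
  have hdne : orderOf g ≠ 0 := by rw [hd]; omega
  have hgp : orderOf (g ^ (d / p)) = p := by
    have h := orderOf_pow_orderOf_div (x := g) hdne (hd ▸ hpd)
    rwa [hd] at h
  set E := g ^ (d / p) with hE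
  have hEp : E ^ p = 1 := by rw [← hgp]; exact pow_orderOf_eq_one E
  set A : Matrix (Fin 4) (Fin 4) ℤ :=
    LinearMap.toMatrixAlgEquiv' (E : (Fin 4 → ℤ) →ₗ[ℤ] (Fin 4 → ℤ)) with hA
  have hApow : A ^ p = 1 := by
    rw [hA, ← map_pow, ← coe_pow_linEquiv, hEp]
    simp
  set Mq : Matrix (Fin 4) (Fin 4) ℚ := (Int.castRingHom ℚ).mapMatrix A with hMq
  have hMqpow : Mq ^ p = 1 := by rw [hMq, ← map_pow, hApow, map_one]
  have hMq1 : Mq ≠ 1 := by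
    intro h
    have hA1 : A = 1 := by
      apply Matrix.map_injective (f := (Int.cast : ℤ → ℚ)) Int.cast_injective
      have h1 : (1 : Matrix (Fin 4) (Fin 4) ℤ).map (Int.cast : ℤ → ℚ) = 1 :=
        Matrix.map_one _ (by simp) (by simp)
      show A.map (Int.cast : ℤ → ℚ) = (1 : Matrix (Fin 4) (Fin 4) ℤ).map (Int.cast : ℤ → ℚ)
      rw [h1]
      exact h
    have hEl : (E : (Fin 4 → ℤ) →ₗ[ℤ] (Fin 4 → ℤ)) = 1 := by
      apply LinearMap.toMatrixAlgEquiv'.injective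
      rw [← hA, hA1, map_one]
    have hE1 : E = 1 := by
      apply LinearEquiv.toLinearMap_injective
      exact hEl
    rw [hE1, orderOf_one] at hgp
    exact hp.one_lt.ne' hgp.symm
  have hp5 : p ≤ 5 := prime_le_five_of_matrix_order p hp Mq hMqpow hMq1
  have hp2 := hp.two_le
  have hp235 : p = 2 ∨ p = 3 ∨ p = 5 := by
    interval_cases p <;> revert hp <;> decide
  have hLid : extPowMap 2 ((g ^ p : (Fin 4 → ℤ) ≃ₗ[ℤ] (Fin 4 → ℤ))
      : (Fin 4 → ℤ) →ₗ[ℤ] (Fin 4 → ℤ)) = LinearMap.id := by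
    rw [extPowMap_pow' g p, ← hordp]
    exact pow_orderOf_eq_one _
  have hsqL := sq_eq_id_of_extPow _ hLid
  have hg2p : g ^ (2 * p) = 1 := by
    apply LinearEquiv.toLinearMap_injective
    rw [show (2 * p) = p * 2 by ring, pow_mul, coe_pow_linEquiv, pow_two, hsqL]
    rfl
  have hd2p : d ∣ 2 * p := by rw [← hd]; exact orderOf_dvd_of_pow_eq_one hg2p
  have hdval : d = p ∨ d = 2 * p := by
    obtain ⟨k, rfl⟩ := hpd
    have hk : k ∣ 2 := by
      have h : p * k ∣ p * 2 := by rw [mul_comm p 2]; exact hd2p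
      exact (Nat.mul_dvd_mul_iff_left hp.pos).mp h
    rcases (Nat.dvd_prime Nat.prime_two).mp hk with h | h
    · left; rw [h, mul_one]
    · right; subst h; ring
  constructor
  · rcases hp235 with rfl | rfl | rfl <;> simp
  · rcases hdval with rfl | rfl <;> rcases hp235 with rfl | rfl | rfl <;> norm_num
end

section
/- Let L be a unimodular lattice, p a prime, and g an isometry of L with g^p = id. Let T = {x ∈ L : g(x) = x} and let S = T^⊥ be its orthogonal complement in L (the coinvariant lattice). Then S is p-elementary: for every x ∈ S ⊗ ℚ such that b(x, s) ∈ ℤ for all s ∈ S, one has p·x ∈ S; in particular the discriminant group S*/S is an elementary abelian p-group. -/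
set_option synthInstance.maxHeartbeats 400000
set_option maxHeartbeats 1000000

open TensorProduct

noncomputable section

/-- The orthogonal complement of a submodule `T` with respect to a bilinear form `b`. -/
def orthCompl {L : Type*} [AddCommGroup L] [Module ℤ L] (b : L →ₗ[ℤ] L →ₗ[ℤ] ℤ)
    (T : Submodule ℤ L) : Submodule ℤ L where
  carrier := {x | ∀ t ∈ T, b x t = 0}
  add_mem' := by
    intro x y hx hy t ht
    simp [map_add, hx t ht, hy t ht]
  zero_mem' := by
    intro t ht
    simp
  smul_mem' := by
    intro c x hx t ht
    simp [map_smul, hx t ht]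

lemma mem_orthCompl' {L : Type*} [AddCommGroup L] [Module ℤ L] (b : L →ₗ[ℤ] L →ₗ[ℤ] ℤ)
    (T : Submodule ℤ L) (x : L) : x ∈ orthCompl b T ↔ ∀ t ∈ T, b x t = 0 := Iff.rfl

lemma aux_tmul_zsmul {L : Type*} [AddCommGroup L] [Module ℤ L] (n : ℤ) (w : L) :
    (1 : ℚ) ⊗ₜ[ℤ] (n • w) = (n : ℚ) • ((1 : ℚ) ⊗ₜ[ℤ] w) := by
  induction n using Int.induction_on with
  | zero => simp
  | succ k ih =>
      rw [add_zsmul, one_zsmul, TensorProduct.tmul_add, ih]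
      push_cast
      module
  | pred k ih =>
      rw [sub_zsmul, one_zsmul, TensorProduct.tmul_add, TensorProduct.tmul_neg, ih]
      push_cast
      module

/-- Clearing denominators in `ℚ ⊗[ℤ] L`. -/
lemma aux_denom {L : Type*} [AddCommGroup L] [Module ℤ L] (m : ℚ ⊗[ℤ] L) :
    ∃ (n : ℤ) (w : L), n ≠ 0 ∧ (n : ℚ) • m = (1 : ℚ) ⊗ₜ[ℤ] w := by
  induction m using TensorProduct.induction_on with
  | zero => exact ⟨1, 0, one_ne_zero, by simp⟩
  | tmul q z =>
      refine ⟨(q.den : ℤ), q.num • z, by exact_mod_cast q.den_nz, ?_⟩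
      have h2 : ((q.den : ℚ)) * q = (q.num : ℚ) := by
        have hd : (q.den : ℚ) ≠ 0 := by exact_mod_cast q.den_nz
        rw [mul_comm]
        nth_rewrite 1 [← Rat.num_div_den q]
        rw [div_mul_cancel₀ _ hd]
      rw [aux_tmul_zsmul, TensorProduct.smul_tmul', TensorProduct.smul_tmul',
        smul_eq_mul, smul_eq_mul, mul_one]
      have h4 : ((q.den : ℤ) : ℚ) = (q.den : ℚ) := by push_cast; ring
      rw [h4, h2]
  | add x y hx hy =>
      obtain ⟨n1, w1, hn1, e1⟩ := hx
      obtain ⟨n2, w2, hn2, e2⟩ := hy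
      refine ⟨n1 * n2, n2 • w1 + n1 • w2, mul_ne_zero hn1 hn2, ?_⟩
      have h3 : ((n1 * n2 : ℤ) : ℚ) • (x + y)
          = (n2 : ℚ) • ((n1 : ℚ) • x) + (n1 : ℚ) • ((n2 : ℚ) • y) := by
        push_cast
        rw [smul_add, ← mul_smul, ← mul_smul, mul_comm (n2 : ℚ)]
      rw [h3, e1, e2, TensorProduct.tmul_add, aux_tmul_zsmul, aux_tmul_zsmul]

/-- Let `L` be a unimodular lattice, `p` a prime and `g` an isometry of `L` with `g ^ p = id`.
Let `T` be the invariant lattice and `S = T^⊥` the coinvariant lattice. Then `S` is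
`p`-elementary: every element `x` of `S ⊗ ℚ` with `b(x, s) ∈ ℤ` for all `s ∈ S` satisfies
`p • x ∈ S`. -/
theorem stmt_7 {L : Type*} [AddCommGroup L] [Module ℤ L] [Module.Free ℤ L] [Module.Finite ℤ L]
    (b : LinearMap.BilinForm ℤ L) (hsymm : ∀ x y, b x y = b y x)
    (huni : Function.Bijective fun x : L => b x)
    (p : ℕ) (hp : p.Prime)
    (g : L ≃ₗ[ℤ] L) (hgb : ∀ x y, b (g x) (g y) = b x y) (hgp : g ^ p = 1)
    (S : Submodule ℤ L)
    (hS : S = orthCompl b (LinearMap.ker ((g : L →ₗ[ℤ] L) - LinearMap.id))) :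
    ∀ x : ℚ ⊗[ℤ] L,
      x ∈ Submodule.span ℚ ((fun s : L => (1 : ℚ) ⊗ₜ[ℤ] s) '' (S : Set L)) →
      (∀ s ∈ S, ∃ n : ℤ, LinearMap.BilinForm.baseChange ℚ b x ((1 : ℚ) ⊗ₜ[ℤ] s) = (n : ℚ)) →
      ∃ s ∈ S, (p : ℚ) • x = (1 : ℚ) ⊗ₜ[ℤ] s := by
  intro x hx hint
  set T : Submodule ℤ L := LinearMap.ker ((g : L →ₗ[ℤ] L) - LinearMap.id) with hT
  set B : LinearMap.BilinForm ℚ (ℚ ⊗[ℤ] L) := LinearMap.BilinForm.baseChange ℚ b with hB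
  set G : (ℚ ⊗[ℤ] L) →ₗ[ℚ] (ℚ ⊗[ℤ] L) := LinearMap.baseChange ℚ (g : L →ₗ[ℤ] L) with hG
  -- membership in T means being fixed by g
  have hTmem : ∀ t : L, t ∈ T ↔ g t = t := by
    intro t
    rw [hT, LinearMap.mem_ker, LinearMap.sub_apply, LinearMap.id_apply, sub_eq_zero]
    simp
  -- b is nondegenerate on L
  have hb0 : ∀ w : L, (∀ z : L, b w z = 0) → w = 0 := by
    intro w h
    have : b w = b (0 : L) := by ext z; simp [h z]
    exact huni.injective this
  -- evaluation of B on elementary tensors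
  have hBt : ∀ a c : L, B ((1 : ℚ) ⊗ₜ[ℤ] a) ((1 : ℚ) ⊗ₜ[ℤ] c) = ((b a c : ℤ) : ℚ) := by
    intro a c
    rw [hB, LinearMap.BilinForm.baseChange_tmul]
    rw [mul_one, zsmul_eq_mul, mul_one]
  -- nondegeneracy of B against elementary tensors
  have hnd : ∀ m : ℚ ⊗[ℤ] L, (∀ z : L, B m ((1 : ℚ) ⊗ₜ[ℤ] z) = 0) → m = 0 := by
    intro m h
    obtain ⟨n, w, hn, e⟩ := aux_denom m
    have hw : w = 0 := by
      apply hb0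
      intro z
      have h2 : B ((1 : ℚ) ⊗ₜ[ℤ] w) ((1 : ℚ) ⊗ₜ[ℤ] z) = 0 := by
        rw [← e, map_smul, LinearMap.smul_apply, h z, smul_zero]
      rw [hBt] at h2
      exact_mod_cast h2
    rw [hw, TensorProduct.tmul_zero] at e
    have hnq : (n : ℚ) ≠ 0 := Int.cast_ne_zero.mpr hn
    exact (smul_eq_zero_iff_right hnq).mp e
  -- G on elementary tensors
  have hGt : ∀ z : L, G ((1 : ℚ) ⊗ₜ[ℤ] z) = (1 : ℚ) ⊗ₜ[ℤ] (g z) := by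
    intro z
    rw [hG, LinearMap.baseChange_tmul]
    simp
  -- adjoint property of G
  have hgb' : ∀ a c : L, b a (g.symm c) = b (g a) c := by
    intro a c
    conv_rhs => rw [← g.apply_symm_apply c]
    exact (hgb a (g.symm c)).symm
  have hA : ∀ (m : ℚ ⊗[ℤ] L) (z : L),
      B (G m) ((1 : ℚ) ⊗ₜ[ℤ] z) = B m ((1 : ℚ) ⊗ₜ[ℤ] (g.symm z)) := by
    intro m z
    induction m using TensorProduct.induction_on with
    | zero => simp
    | tmul q a =>
        rw [hG, LinearMap.baseChange_tmul, hB, LinearMap.BilinForm.baseChange_tmul,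
          LinearMap.BilinForm.baseChange_tmul]
        congr 1
        rw [hgb' a z]
        simp
    | add u v hu hv =>
        simp only [map_add, LinearMap.add_apply, hu, hv]
  -- S is g-stable
  have hSg : ∀ s ∈ S, g s ∈ S := by
    intro s hs
    rw [hS] at hs ⊢
    rw [mem_orthCompl'] at hs ⊢
    intro t ht
    have hgt : g t = t := (hTmem t).mp ht
    calc b (g s) t = b (g s) (g t) := by rw [hgt]
      _ = b s t := hgb s t
      _ = 0 := hs t ht
  -- elements of the form z - g⁻¹ z lie in S
  have hDS : ∀ z : L, z - g.symm z ∈ S := by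
    intro z
    rw [hS, mem_orthCompl']
    intro t ht
    have hgt : g t = t := (hTmem t).mp ht
    have h1 : b (g.symm z) t = b z t := by
      have h0 := hgb (g.symm z) t
      rw [g.apply_symm_apply, hgt] at h0
      exact h0.symm
    rw [map_sub, LinearMap.sub_apply, h1, sub_self]
  -- everything in the span of S is orthogonal to all elements of T
  have horthT : ∀ t ∈ T, ∀ m ∈ Submodule.span ℚ ((fun s : L => (1 : ℚ) ⊗ₜ[ℤ] s) '' (S : Set L)),
      B m ((1 : ℚ) ⊗ₜ[ℤ] t) = 0 := by
    intro t ht m hm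
    induction hm using Submodule.span_induction with
    | mem m hm =>
        obtain ⟨s, hs, rfl⟩ := hm
        have hs' : s ∈ S := hs
        rw [hS, mem_orthCompl'] at hs'
        rw [hBt]
        exact_mod_cast hs' t ht
    | zero => simp
    | add u v hu hv hu' hv' => rw [map_add, LinearMap.add_apply, hu', hv', add_zero]
    | smul q u hu hu' => rw [map_smul, LinearMap.smul_apply, hu', smul_zero]
  -- construct the integral functional and the element w
  classical
  let ee := Module.Free.chooseBasis ℤ L
  have hval : ∀ i, ∃ n : ℤ, B x ((1 : ℚ) ⊗ₜ[ℤ] (ee i - g.symm (ee i))) = (n : ℚ) := by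
    intro i
    exact hint _ (hDS (ee i))
  let ℓ : L →ₗ[ℤ] ℤ := ee.constr ℤ fun i => (hval i).choose
  have hℓ : ∀ z : L, ((ℓ z : ℤ) : ℚ) = B x ((1 : ℚ) ⊗ₜ[ℤ] (z - g.symm z)) := by
    have key : (Algebra.linearMap ℤ ℚ).comp ℓ
        = ((B x).restrictScalars ℤ).comp ((TensorProduct.mk ℤ ℚ L 1).comp
            (LinearMap.id - (g.symm : L →ₗ[ℤ] L))) := by
      apply ee.ext
      intro i
      have h1 : ℓ (ee i) = (hval i).choose := ee.constr_basis ℤ _ i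
      have h2 := (hval i).choose_spec
      simp only [LinearMap.comp_apply, Algebra.linearMap_apply, h1,
        LinearMap.sub_apply, LinearMap.id_apply, LinearEquiv.coe_coe,
        TensorProduct.mk_apply, LinearMap.coe_restrictScalars]
      have h3 : (algebraMap ℤ ℚ) (hval i).choose = (((hval i).choose : ℤ) : ℚ) := by simp
      rw [h3]
      exact h2.symm
    intro z
    have hz := LinearMap.congr_fun key z
    simp at hz
    exact hz
  obtain ⟨w, hw⟩ := huni.surjective ℓ
  have hwz : ∀ z : L, b w z = ℓ z := fun z => by rw [← hw]
  -- w lies in S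
  have hwS : w ∈ S := by
    rw [hS, mem_orthCompl']
    intro t ht
    have hgt : g.symm t = t := by
      conv_lhs => rw [← (hTmem t).mp ht]
      exact g.symm_apply_apply t
    have h0 : ((ℓ t : ℤ) : ℚ) = 0 := by
      rw [hℓ t, hgt, sub_self, TensorProduct.tmul_zero, map_zero]
    have hz : ℓ t = 0 := by exact_mod_cast h0
    rw [hwz t, hz]
  -- key identity : x - G x = 1 ⊗ w
  have hkey : x - G x = (1 : ℚ) ⊗ₜ[ℤ] w := by
    rw [← sub_eq_zero]
    apply hnd
    intro z
    rw [map_sub, map_sub, LinearMap.sub_apply, LinearMap.sub_apply, hA x z, hBt]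
    have hsplit : B x ((1 : ℚ) ⊗ₜ[ℤ] (z - g.symm z))
        = B x ((1 : ℚ) ⊗ₜ[ℤ] z) - B x ((1 : ℚ) ⊗ₜ[ℤ] (g.symm z)) := by
      rw [TensorProduct.tmul_sub, map_sub]
    rw [hwz z, hℓ z, hsplit]
    ring
  -- inductive step : x - G^i x lies in the image of S
  have hstep : ∀ i : ℕ, ∃ s ∈ S, x - (G ^ i) x = (1 : ℚ) ⊗ₜ[ℤ] s := by
    intro i
    induction i with
    | zero => exact ⟨0, S.zero_mem, by simp⟩
    | succ i ih =>
        obtain ⟨s, hs, e⟩ := ih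
        refine ⟨w + g s, S.add_mem hwS (hSg s hs), ?_⟩
        have h1 : (G ^ (i + 1)) x = G ((G ^ i) x) := by
          rw [pow_succ']
          rfl
        have h2 : x - (G ^ (i + 1)) x = (x - G x) + G (x - (G ^ i) x) := by
          rw [h1, map_sub]
          abel
        rw [h2, hkey, e, hGt s, TensorProduct.tmul_add]
  -- powers of g.symm
  have hApow : ∀ (i : ℕ) (z : L),
      B ((G ^ i) x) ((1 : ℚ) ⊗ₜ[ℤ] z) = B x ((1 : ℚ) ⊗ₜ[ℤ] ((g.symm ^ i) z)) := by
    intro i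
    induction i with
    | zero => intro z; simp
    | succ i ih =>
        intro z
        have h1 : (G ^ (i + 1)) x = G ((G ^ i) x) := by
          rw [pow_succ']
          rfl
        have h2 : (g.symm ^ (i + 1)) z = (g.symm ^ i) (g.symm z) := by
          rw [pow_succ]
          rfl
        rw [h1, hA ((G ^ i) x) z, ih (g.symm z), h2]
  -- the norm element vanishes on x
  have hNzero : (∑ i ∈ Finset.range p, (G ^ i) x) = 0 := by
    apply hnd
    intro z
    rw [map_sum, LinearMap.sum_apply]
    have h1 : ∀ i ∈ Finset.range p,
        B ((G ^ i) x) ((1 : ℚ) ⊗ₜ[ℤ] z) = B x ((1 : ℚ) ⊗ₜ[ℤ] ((g.symm ^ i) z)) :=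
      fun i _ => hApow i z
    rw [Finset.sum_congr rfl h1, ← map_sum, ← TensorProduct.tmul_sum]
    apply horthT _ _ x hx
    rw [hTmem]
    have hsymm_pow : ∀ i : ℕ, (g.symm ^ (i + 1)) z = g.symm ((g.symm ^ i) z) := by
      intro i
      rw [pow_succ']
      rfl
    have hps : p = (p - 1) + 1 := (Nat.succ_pred_eq_of_pos hp.pos).symm
    have hterm : ∀ i : ℕ, g ((g.symm ^ (i + 1)) z) = (g.symm ^ i) z := by
      intro i
      rw [hsymm_pow i, g.apply_symm_apply]
    have hlast : (g.symm ^ (p - 1)) z = g z := by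
      have h1 : g ^ (p - 1) = g⁻¹ :=
        eq_inv_of_mul_eq_one_left (by rw [← pow_succ, ← hps, hgp])
      have hinv : g.symm = g⁻¹ := rfl
      rw [hinv, inv_pow, h1, inv_inv]
    rw [map_sum]
    conv_lhs => rw [hps, Finset.sum_range_succ']
    conv_rhs => rw [hps, Finset.sum_range_succ]
    rw [hlast]
    refine congrArg₂ (· + ·) ?_ ?_
    · exact Finset.sum_congr rfl fun i _ => hterm i
    · simp
  -- final assembly
  have hsum : (∑ i ∈ Finset.range p, (x - (G ^ i) x)) = (p : ℚ) • x := by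
    rw [Finset.sum_sub_distrib, hNzero, sub_zero, Finset.sum_const, Finset.card_range]
    rw [Nat.cast_smul_eq_nsmul ℚ]
  choose sfun hsfun hsfun2 using hstep
  refine ⟨∑ i ∈ Finset.range p, sfun i, Submodule.sum_mem S fun i _ => hsfun i, ?_⟩
  rw [← hsum, TensorProduct.tmul_sum]
  exact Finset.sum_congr rfl fun i _ => hsfun2 i
end
end

section
/- Let M, M' ∈ M_2(ℤ) be symmetric even matrices that are indefinite (det M < 0 and det M' < 0), with |det M| ≤ 16, and suppose that M and M' lie in the same genus, i.e. for every prime q there exists P_q ∈ GL_2(ℤ_q) (ℤ_q the q-adic integers) with P_qᵀ M P_q = M'. Then M and M' are ℤ-congruent: there exists P ∈ GL_2(ℤ) with PᵀMP = M'. Equivalently, an indefinite even lattice of rank 2 with more than one class in its genus has discriminant d ≥ 17. -/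
open Matrix

/-- congruence of matrices over a commutative ring -/
def QC {R : Type*} [CommRing R] (A B : Matrix (Fin 2) (Fin 2) R) : Prop :=
  ∃ P : Matrix (Fin 2) (Fin 2) R, IsUnit P.det ∧ Pᵀ * A * P = B

def mat (a b c : ℤ) : Matrix (Fin 2) (Fin 2) ℤ := !![2*a, b; b, 2*c]

theorem QC.refl {R : Type*} [CommRing R] (A : Matrix (Fin 2) (Fin 2) R) : QC A A :=
  ⟨1, by simp, by simp⟩

theorem QC.trans {R : Type*} [CommRing R] {A B C : Matrix (Fin 2) (Fin 2) R}
    (h1 : QC A B) (h2 : QC B C) : QC A C := by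
  obtain ⟨P, hP, hP2⟩ := h1
  obtain ⟨Q, hQ, hQ2⟩ := h2
  refine ⟨P * Q, by rw [Matrix.det_mul]; exact hP.mul hQ,
    by rw [Matrix.transpose_mul, ← hQ2, ← hP2]; noncomm_ring⟩

theorem QC.symm {R : Type*} [CommRing R] {A B : Matrix (Fin 2) (Fin 2) R}
    (h : QC A B) : QC B A := by
  obtain ⟨P, hP, rfl⟩ := h
  have h1 := Matrix.mul_nonsing_inv P hP
  refine ⟨P⁻¹, ?_, ?_⟩
  · have hdet : P.det * P⁻¹.det = 1 := by rw [← Matrix.det_mul, h1, Matrix.det_one]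
    exact IsUnit.of_mul_eq_one _ (by rw [mul_comm] at hdet; exact hdet)
  · calc (P⁻¹)ᵀ * (Pᵀ * A * P) * P⁻¹
        = (P * P⁻¹)ᵀ * A * (P * P⁻¹) := by rw [Matrix.transpose_mul]; noncomm_ring
      _ = A := by rw [h1]; simp

theorem QC.map {R S : Type*} [CommRing R] [CommRing S] (f : R →+* S)
    {A B : Matrix (Fin 2) (Fin 2) R} (h : QC A B) : QC (A.map f) (B.map f) := by
  obtain ⟨P, hP, hP2⟩ := h
  refine ⟨P.map f, ?_, ?_⟩
  · rw [← RingHom.mapMatrix_apply, ← RingHom.map_det]; exact hP.map f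
  · rw [← Matrix.transpose_map, ← Matrix.map_mul, ← Matrix.map_mul, hP2]

/-- general change of variable on triples -/
theorem QC.gen {a b c : ℤ} (p q r s : ℤ) (h : p * s - q * r = 1 ∨ p * s - q * r = -1) :
    QC (mat a b c) (mat (a*p^2 + b*p*r + c*r^2) (2*a*p*q + b*(p*s+q*r) + 2*c*r*s)
      (a*q^2 + b*q*s + c*s^2)) := by
  refine ⟨!![p, q; r, s], ?_, ?_⟩
  · rw [Matrix.det_fin_two_of, Int.isUnit_iff]
    rcases h with h | h <;> omega
  · have ht : (!![p, q; r, s])ᵀ = !![p, r; q, s] := by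
      ext i j; fin_cases i <;> fin_cases j <;> rfl
    rw [ht]
    ext i j
    fin_cases i <;> fin_cases j <;>
      simp [mat, Matrix.mul_apply, Fin.sum_univ_two] <;> ring

theorem QC.tr (a b c t : ℤ) : QC (mat a b c) (mat a (b + 2*a*t) (a*t^2 + b*t + c)) := by
  have h := QC.gen (a := a) (b := b) (c := c) 1 t 0 1 (by left; ring)
  convert h using 2 <;> ring

theorem QC.sw (a b c : ℤ) : QC (mat a b c) (mat c b a) := by
  have h := QC.gen (a := a) (b := b) (c := c) 0 1 1 0 (by right; ring)
  convert h using 2 <;> ring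

theorem QC.fl (a b c : ℤ) : QC (mat a b c) (mat a (-b) c) := by
  have h := QC.gen (a := a) (b := b) (c := c) 1 0 0 (-1) (by right; ring)
  convert h using 2 <;> ring

theorem QC.det_eq {A B : Matrix (Fin 2) (Fin 2) ℤ} (h : QC A B) : B.det = A.det := by
  obtain ⟨P, hP, rfl⟩ := h
  rw [Int.isUnit_iff] at hP
  rw [Matrix.det_mul, Matrix.det_mul, Matrix.det_transpose]
  rcases hP with h | h <;> rw [h] <;> ring

theorem mat_det (a b c : ℤ) : (mat a b c).det = 4*(a*c) - b^2 := by
  rw [mat, Matrix.det_fin_two_of]; ring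

theorem exists_t (a b : ℤ) (ha : a ≠ 0) : ∃ t r, b + 2*a*t = r ∧ |r| ≤ |a| := by
  rcases ha.lt_or_gt with h | h
  · -- a < 0
    have hm : (0:ℤ) < -(2*a) := by linarith
    set m := -(2*a) with hm'
    have h0 : 0 ≤ b % m := Int.emod_nonneg b (by omega)
    have h1 : b % m < m := Int.emod_lt_of_pos b hm
    have hq : m * (b / m) + b % m = b := Int.mul_ediv_add_emod b m
    have e1 : 2*a*(b / m) = -(m * (b / m)) := by rw [hm']; ring
    have e2 : 2*a*(b / m + 1) = -(m * (b / m)) - m := by rw [hm']; ring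
    by_cases hr : b % m ≤ -a
    · exact ⟨b / m, b % m, by linarith, by rw [abs_of_nonneg h0, abs_of_neg h]; exact hr⟩
    · refine ⟨b / m + 1, b % m - m, by linarith, ?_⟩
      rw [abs_of_neg h, abs_of_neg (by omega : b % m - m < 0)]
      omega
  · -- 0 < a
    have hm : (0:ℤ) < 2*a := by linarith
    set m := 2*a with hm'
    have h0 : 0 ≤ b % m := Int.emod_nonneg b (by omega)
    have h1 : b % m < m := Int.emod_lt_of_pos b hm
    have hq : m * (b / m) + b % m = b := Int.mul_ediv_add_emod b m
    have e1 : 2*a*(-(b / m)) = -(m * (b / m)) := by rw [hm']; ring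
    have e2 : 2*a*(-(b / m) - 1) = -(m * (b / m)) - m := by rw [hm']; ring
    by_cases hr : b % m ≤ a
    · exact ⟨-(b / m), b % m, by linarith, by rw [abs_of_nonneg h0, abs_of_pos h]; exact hr⟩
    · refine ⟨-(b / m) - 1, b % m - m, by linarith, ?_⟩
      rw [abs_of_pos h, abs_of_neg (by omega : b % m - m < 0)]
      omega

theorem reduce_aux : ∀ n : ℕ, ∀ a b c : ℤ, a.natAbs ≤ n →
    ∃ a' b' c', QC (mat a b c) (mat a' b' c') ∧
      (a' = 0 ∨ (|b'| ≤ |a'| ∧ |a'| ≤ |c'|)) := by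
  intro n
  induction n with
  | zero => intro a b c h; exact ⟨a, b, c, QC.refl _, Or.inl (by omega)⟩
  | succ n ih =>
    intro a b c h
    by_cases ha : a = 0
    · exact ⟨a, b, c, QC.refl _, Or.inl ha⟩
    · obtain ⟨t, r, hr, hrle⟩ := exists_t a b ha
      set c₁ := a*t^2 + b*t + c with hc₁
      have h1 : QC (mat a b c) (mat a r c₁) := hr ▸ QC.tr a b c t
      by_cases hc : |a| ≤ |c₁|
      · exact ⟨a, r, c₁, h1, Or.inr ⟨hrle, hc⟩⟩
      · have h2 : QC (mat a b c) (mat c₁ r a) := h1.trans (QC.sw a r c₁)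
        have hlt : c₁.natAbs ≤ n := by
          rw [not_le] at hc
          rw [Int.abs_eq_natAbs, Int.abs_eq_natAbs] at hc
          omega
        obtain ⟨a', b', c', h3, h4⟩ := ih c₁ r a hlt
        exact ⟨a', b', c', h2.trans h3, h4⟩

theorem reduce (a b c : ℤ) :
    ∃ a' b' c', QC (mat a b c) (mat a' b' c') ∧
      (a' = 0 ∨ (|b'| ≤ |a'| ∧ |a'| ≤ |c'|)) :=
  reduce_aux a.natAbs a b c le_rfl

theorem QC.tr' (a b c t b₂ c₂ : ℤ) (h1 : b + 2*a*t = b₂) (h2 : a*t^2 + b*t + c = c₂) :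
    QC (mat a b c) (mat a b₂ c₂) := h1 ▸ h2 ▸ QC.tr a b c t

theorem QC.fl' (a b c b₂ : ℤ) (h1 : -b = b₂) : QC (mat a b c) (mat a b₂ c) := h1 ▸ QC.fl a b c

theorem QC.gen' (a b c p q r s a₂ b₂ c₂ : ℤ) (h : p*s - q*r = 1 ∨ p*s - q*r = -1)
    (h1 : a*p^2 + b*p*r + c*r^2 = a₂) (h2 : 2*a*p*q + b*(p*s+q*r) + 2*c*r*s = b₂)
    (h3 : a*q^2 + b*q*s + c*s^2 = c₂) : QC (mat a b c) (mat a₂ b₂ c₂) :=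
  h1 ▸ h2 ▸ h3 ▸ QC.gen p q r s h

theorem QC.azero (b c k c₂ : ℤ) (hk : 0 < k) (hb : b = k ∨ b = -k) (hc : c % k = c₂) :
    QC (mat 0 b c) (mat 0 k c₂) := by
  have step : QC (mat 0 k c) (mat 0 k c₂) := by
    refine QC.tr' 0 k c (-(c/k)) k c₂ (by ring) ?_
    rw [← hc, Int.emod_def]; ring
  rcases hb with rfl | rfl
  · exact step
  · exact (QC.fl' 0 (-k) c k (by ring)).trans step

theorem reduced_cases (a b c D : ℤ) (h : b^2 - 4*a*c = D) (hD : 0 < D) :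
    ∃ a' b' c', QC (mat a b c) (mat a' b' c') ∧ b'^2 - 4*a'*c' = D ∧
      ((a' = 0 ∧ b'^2 = D) ∨ (a' ≠ 0 ∧ 4*a'^2 ≤ D ∧ b'^2 ≤ a'^2 ∧ a'*c' < 0)) := by
  obtain ⟨a', b', c', hQ, hred⟩ := reduce a b c
  have hd2 : b'^2 - 4*a'*c' = D := by
    have hde := hQ.det_eq
    rw [mat_det, mat_det] at hde
    linarith
  refine ⟨a', b', c', hQ, hd2, ?_⟩
  rcases hred with ha0 | ⟨hb, hc⟩
  · exact Or.inl ⟨ha0, by rw [ha0] at hd2; linarith⟩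
  · by_cases ha' : a' = 0
    · refine Or.inl ⟨ha', ?_⟩
      rw [ha'] at hd2; linarith
    · have h1 : b'^2 ≤ a'^2 := by
        nlinarith [abs_nonneg b', abs_nonneg a', sq_abs a', sq_abs b',
          mul_le_mul hb hb (abs_nonneg b') (abs_nonneg a')]
      have h2 : a'^2 ≤ |a'*c'| := by
        rw [abs_mul]
        nlinarith [abs_nonneg a', sq_abs a',
          mul_le_mul_of_nonneg_left hc (abs_nonneg a')]
      have hsq : 0 < a'^2 := by positivity
      have h3 : a'*c' < 0 := by
        rcases le_or_gt 0 (a'*c') with hc0 | hc0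
        · exfalso
          rw [abs_of_nonneg hc0] at h2
          linarith
        · exact hc0
      have h4 : 4*a'^2 ≤ D := by
        rw [abs_of_neg h3] at h2
        nlinarith [sq_nonneg b']
      exact Or.inr ⟨ha', h4, h1, h3⟩

theorem int_sq_le (x k : ℤ) (hk : 0 ≤ k) (h2 : x^2 ≤ k^2) : -k ≤ x ∧ x ≤ k := by
  constructor <;> nlinarith [sq_nonneg (x - k), sq_nonneg (x + k)]

-- explicit chains
theorem ch4a : QC (mat 1 0 (-1)) (mat 0 2 1) :=
  (QC.tr' 1 0 (-1) 1 2 0 (by ring) (by ring)).trans (QC.sw 1 2 0)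
theorem ch4b : QC (mat (-1) 0 1) (mat 0 2 1) :=
  (((QC.tr' (-1) 0 1 1 (-2) 0 (by ring) (by ring)).trans
    (QC.fl' (-1) (-2) 0 2 (by ring))).trans (QC.sw (-1) 2 0)).trans
    (QC.tr' 0 2 (-1) 1 2 1 (by ring) (by ring))
theorem ch5b : QC (mat 1 (-1) (-1)) (mat 1 1 (-1)) := QC.fl' 1 (-1) (-1) 1 (by ring)
theorem ch5c : QC (mat (-1) 1 1) (mat 1 1 (-1)) := QC.sw (-1) 1 1
theorem ch5d : QC (mat (-1) (-1) 1) (mat 1 1 (-1)) := (QC.sw (-1) (-1) 1).trans ch5b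
theorem ch8b : QC (mat (-1) 0 2) (mat 1 0 (-2)) :=
  QC.gen' (-1) 0 2 1 2 1 1 1 0 (-2) (Or.inr (by ring)) (by ring) (by ring) (by ring)
theorem ch9a : QC (mat 1 1 (-2)) (mat 0 3 1) :=
  ((QC.gen' 1 1 (-2) 1 0 1 1 0 (-3) (-2) (Or.inl (by ring)) (by ring) (by ring) (by ring)).trans
    (QC.fl' 0 (-3) (-2) 3 (by ring))).trans (QC.tr' 0 3 (-2) 1 3 1 (by ring) (by ring))
theorem ch9b : QC (mat 1 (-1) (-2)) (mat 0 3 1) := (QC.fl' 1 (-1) (-2) 1 (by ring)).trans ch9a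
theorem ch9c : QC (mat (-1) 1 2) (mat 0 3 2) :=
  ((QC.sw (-1) 1 2).trans
    (QC.gen' 2 1 (-1) 1 0 (-1) 1 0 3 (-1) (Or.inl (by ring)) (by ring) (by ring) (by ring))).trans
    (QC.tr' 0 3 (-1) 1 3 2 (by ring) (by ring))
theorem ch9d : QC (mat (-1) (-1) 2) (mat 0 3 2) := (QC.fl' (-1) (-1) 2 1 (by ring)).trans ch9c
theorem ch13a : QC (mat 1 (-1) (-3)) (mat 1 1 (-3)) := QC.fl' 1 (-1) (-3) 1 (by ring)
theorem ch13b : QC (mat (-1) 1 3) (mat 1 1 (-3)) :=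
  (((QC.sw (-1) 1 3).trans
    (QC.gen' 3 1 (-1) 1 0 (-1) 1 1 3 (-1) (Or.inl (by ring)) (by ring) (by ring) (by ring))).trans
    (QC.tr' 1 3 (-1) (-1) 1 (-3) (by ring) (by ring)))
theorem ch13c : QC (mat (-1) (-1) 3) (mat 1 1 (-3)) := (QC.fl' (-1) (-1) 3 1 (by ring)).trans ch13b
theorem ch16a : QC (mat 1 0 (-4)) (mat 0 4 1) :=
  (QC.tr' 1 0 (-4) 2 4 0 (by ring) (by ring)).trans (QC.sw 1 4 0)
theorem ch16b : QC (mat (-1) 0 4) (mat 0 4 3) :=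
  ((((QC.tr' (-1) 0 4 2 (-4) 0 (by ring) (by ring)).trans
    (QC.fl' (-1) (-4) 0 4 (by ring))).trans (QC.sw (-1) 4 0)).trans
    (QC.tr' 0 4 (-1) 1 4 3 (by ring) (by ring)))
theorem ch16c : QC (mat 2 0 (-2)) (mat 0 4 2) :=
  (QC.tr' 2 0 (-2) 1 4 0 (by ring) (by ring)).trans (QC.sw 2 4 0)
theorem ch16d : QC (mat (-2) 0 2) (mat 0 4 2) :=
  ((((QC.tr' (-2) 0 2 1 (-4) 0 (by ring) (by ring)).trans
    (QC.fl' (-2) (-4) 0 4 (by ring))).trans (QC.sw (-2) 4 0)).trans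
    (QC.tr' 0 4 (-2) 1 4 2 (by ring) (by ring)))

theorem classify1 (a b c : ℤ) (h : b^2 - 4*a*c = 1) : QC (mat a b c) (mat 0 1 0) := by
  obtain ⟨a', b', c', hQ, hd2, hcase⟩ := reduced_cases a b c 1 h (by norm_num)
  refine hQ.trans ?_
  rcases hcase with ⟨ha0, hbD⟩ | ⟨ha', h4, h1, h3⟩
  · subst ha0
    have hb : b' = 1 ∨ b' = -1 := by
      have e : (b' - 1) * (b' + 1) = 0 := by linear_combination hbD
      rcases mul_eq_zero.mp e with e | e
      · exact Or.inl (by omega)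
      · exact Or.inr (by omega)
    exact QC.azero b' c' 1 0 (by norm_num) hb (Int.emod_one c')
  · exfalso; nlinarith

theorem classify4 (a b c : ℤ) (h : b^2 - 4*a*c = 4) :
    QC (mat a b c) (mat 0 2 0) ∨ QC (mat a b c) (mat 0 2 1) := by
  obtain ⟨a', b', c', hQ, hd2, hcase⟩ := reduced_cases a b c 4 h (by norm_num)
  have key : QC (mat a' b' c') (mat 0 2 0) ∨ QC (mat a' b' c') (mat 0 2 1) := by
    rcases hcase with ⟨ha0, hbD⟩ | ⟨ha', h4, h1, h3⟩
    · subst ha0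
      have hb : b' = 2 ∨ b' = -2 := by
        have e : (b' - 2) * (b' + 2) = 0 := by linear_combination hbD
        rcases mul_eq_zero.mp e with e | e
        · exact Or.inl (by omega)
        · exact Or.inr (by omega)
      have he : 0 ≤ c' % 2 ∧ c' % 2 < 2 :=
        ⟨Int.emod_nonneg c' (by norm_num), Int.emod_lt_of_pos c' (by norm_num)⟩
      rcases (by omega : c' % 2 = 0 ∨ c' % 2 = 1) with h0 | h0
      · exact Or.inl (QC.azero b' c' 2 0 (by norm_num) hb h0)
      · exact Or.inr (QC.azero b' c' 2 1 (by norm_num) hb h0)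
    · obtain ⟨hal, har⟩ := int_sq_le a' 1 (by norm_num) (by nlinarith)
      obtain ⟨hbl, hbr⟩ := int_sq_le b' 1 (by norm_num) (by nlinarith)
      rcases (by omega : a' = -1 ∨ a' = 0 ∨ a' = 1) with rfl | rfl | rfl
      · rcases (by omega : b' = -1 ∨ b' = 0 ∨ b' = 1) with rfl | rfl | rfl <;>
          norm_num at hd2
        · exfalso; omega
        · have : c' = 1 := by omega
          subst this
          exact Or.inr ch4b
        · exfalso; omega
      · exact absurd rfl ha'
      · rcases (by omega : b' = -1 ∨ b' = 0 ∨ b' = 1) with rfl | rfl | rfl <;>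
          norm_num at hd2
        · exfalso; omega
        · have : c' = -1 := by omega
          subst this
          exact Or.inr ch4a
        · exfalso; omega
  rcases key with k | k
  · exact Or.inl (hQ.trans k)
  · exact Or.inr (hQ.trans k)

theorem classify5 (a b c : ℤ) (h : b^2 - 4*a*c = 5) :
    QC (mat a b c) (mat 1 1 (-1)) := by
  obtain ⟨a', b', c', hQ, hd2, hcase⟩ := reduced_cases a b c 5 h (by norm_num)
  have key : QC (mat a' b' c') (mat 1 1 (-1)) := by
    rcases hcase with ⟨ha0, hbD⟩ | ⟨ha', h4, h1, h3⟩
    · subst ha0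
      exfalso
      obtain ⟨hbl, hbr⟩ := int_sq_le b' 4 (by norm_num) (by nlinarith)
      rcases (by omega : b' = -4 ∨ b' = -3 ∨ b' = -2 ∨ b' = -1 ∨ b' = 0 ∨ b' = 1 ∨ b' = 2 ∨ b' = 3 ∨ b' = 4) with rfl|rfl|rfl|rfl|rfl|rfl|rfl|rfl|rfl <;> norm_num at hbD
    · obtain ⟨hal, har⟩ := int_sq_le a' 2 (by norm_num) (by nlinarith)
      obtain ⟨hbl, hbr⟩ := int_sq_le b' 2 (by norm_num) (by nlinarith)
      rcases (by omega : a' = -2 ∨ a' = -1 ∨ a' = 0 ∨ a' = 1 ∨ a' = 2) with rfl|rfl|rfl|rfl|rfl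
      · exfalso; norm_num at h4
      · rcases (by omega : b' = -2 ∨ b' = -1 ∨ b' = 0 ∨ b' = 1 ∨ b' = 2) with rfl|rfl|rfl|rfl|rfl
        · exfalso; norm_num at h1
        · norm_num at hd2
          have hc : c' = 1 := by omega
          subst hc
          exact ch5d
        · exfalso; norm_num at hd2; omega
        · norm_num at hd2
          have hc : c' = 1 := by omega
          subst hc
          exact ch5c
        · exfalso; norm_num at h1
      · exact absurd rfl ha'
      · rcases (by omega : b' = -2 ∨ b' = -1 ∨ b' = 0 ∨ b' = 1 ∨ b' = 2) with rfl|rfl|rfl|rfl|rfl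
        · exfalso; norm_num at h1
        · norm_num at hd2
          have hc : c' = -1 := by omega
          subst hc
          exact ch5b
        · exfalso; norm_num at hd2; omega
        · norm_num at hd2
          have hc : c' = -1 := by omega
          subst hc
          exact QC.refl _
        · exfalso; norm_num at h1
      · exfalso; norm_num at h4
  exact hQ.trans key
theorem classify8 (a b c : ℤ) (h : b^2 - 4*a*c = 8) :
    QC (mat a b c) (mat 1 0 (-2)) := by
  obtain ⟨a', b', c', hQ, hd2, hcase⟩ := reduced_cases a b c 8 h (by norm_num)
  have key : QC (mat a' b' c') (mat 1 0 (-2)) := by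
    rcases hcase with ⟨ha0, hbD⟩ | ⟨ha', h4, h1, h3⟩
    · subst ha0
      exfalso
      obtain ⟨hbl, hbr⟩ := int_sq_le b' 4 (by norm_num) (by nlinarith)
      rcases (by omega : b' = -4 ∨ b' = -3 ∨ b' = -2 ∨ b' = -1 ∨ b' = 0 ∨ b' = 1 ∨ b' = 2 ∨ b' = 3 ∨ b' = 4) with rfl|rfl|rfl|rfl|rfl|rfl|rfl|rfl|rfl <;> norm_num at hbD
    · obtain ⟨hal, har⟩ := int_sq_le a' 2 (by norm_num) (by nlinarith)
      obtain ⟨hbl, hbr⟩ := int_sq_le b' 2 (by norm_num) (by nlinarith)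
      rcases (by omega : a' = -2 ∨ a' = -1 ∨ a' = 0 ∨ a' = 1 ∨ a' = 2) with rfl|rfl|rfl|rfl|rfl
      · exfalso; norm_num at h4
      · rcases (by omega : b' = -2 ∨ b' = -1 ∨ b' = 0 ∨ b' = 1 ∨ b' = 2) with rfl|rfl|rfl|rfl|rfl
        · exfalso; norm_num at h1
        · exfalso; norm_num at hd2; omega
        · norm_num at hd2
          have hc : c' = 2 := by omega
          subst hc
          exact ch8b
        · exfalso; norm_num at hd2; omega
        · exfalso; norm_num at h1
      · exact absurd rfl ha'
      · rcases (by omega : b' = -2 ∨ b' = -1 ∨ b' = 0 ∨ b' = 1 ∨ b' = 2) with rfl|rfl|rfl|rfl|rfl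
        · exfalso; norm_num at h1
        · exfalso; norm_num at hd2; omega
        · norm_num at hd2
          have hc : c' = -2 := by omega
          subst hc
          exact QC.refl _
        · exfalso; norm_num at hd2; omega
        · exfalso; norm_num at h1
      · exfalso; norm_num at h4
  exact hQ.trans key
theorem classify9 (a b c : ℤ) (h : b^2 - 4*a*c = 9) :
    QC (mat a b c) (mat 0 3 0) ∨ QC (mat a b c) (mat 0 3 1) ∨ QC (mat a b c) (mat 0 3 2) := by
  obtain ⟨a', b', c', hQ, hd2, hcase⟩ := reduced_cases a b c 9 h (by norm_num)
  have key : QC (mat a' b' c') (mat 0 3 0) ∨ QC (mat a' b' c') (mat 0 3 1) ∨ QC (mat a' b' c') (mat 0 3 2) := by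
    rcases hcase with ⟨ha0, hbD⟩ | ⟨ha', h4, h1, h3⟩
    · subst ha0
      have hb : b' = 3 ∨ b' = -3 := by
        have e : (b' - 3) * (b' + 3) = 0 := by linear_combination hbD
        rcases mul_eq_zero.mp e with e | e
        · exact Or.inl (by omega)
        · exact Or.inr (by omega)
      have he : 0 ≤ c' % 3 ∧ c' % 3 < 3 :=
        ⟨Int.emod_nonneg c' (by norm_num), Int.emod_lt_of_pos c' (by norm_num)⟩
      rcases (by omega : c' % 3 = 0 ∨ c' % 3 = 1 ∨ c' % 3 = 2) with h0 | h0 | h0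
      · exact Or.inl (QC.azero b' c' 3 0 (by norm_num) hb h0)
      · exact Or.inr (Or.inl (QC.azero b' c' 3 1 (by norm_num) hb h0))
      · exact Or.inr (Or.inr (QC.azero b' c' 3 2 (by norm_num) hb h0))
    · obtain ⟨hal, har⟩ := int_sq_le a' 2 (by norm_num) (by nlinarith)
      obtain ⟨hbl, hbr⟩ := int_sq_le b' 2 (by norm_num) (by nlinarith)
      rcases (by omega : a' = -2 ∨ a' = -1 ∨ a' = 0 ∨ a' = 1 ∨ a' = 2) with rfl|rfl|rfl|rfl|rfl
      · exfalso; norm_num at h4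
      · rcases (by omega : b' = -2 ∨ b' = -1 ∨ b' = 0 ∨ b' = 1 ∨ b' = 2) with rfl|rfl|rfl|rfl|rfl
        · exfalso; norm_num at h1
        · norm_num at hd2
          have hc : c' = 2 := by omega
          subst hc
          exact Or.inr (Or.inr (ch9d))
        · exfalso; norm_num at hd2; omega
        · norm_num at hd2
          have hc : c' = 2 := by omega
          subst hc
          exact Or.inr (Or.inr (ch9c))
        · exfalso; norm_num at h1
      · exact absurd rfl ha'
      · rcases (by omega : b' = -2 ∨ b' = -1 ∨ b' = 0 ∨ b' = 1 ∨ b' = 2) with rfl|rfl|rfl|rfl|rfl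
        · exfalso; norm_num at h1
        · norm_num at hd2
          have hc : c' = -2 := by omega
          subst hc
          exact Or.inr (Or.inl (ch9b))
        · exfalso; norm_num at hd2; omega
        · norm_num at hd2
          have hc : c' = -2 := by omega
          subst hc
          exact Or.inr (Or.inl (ch9a))
        · exfalso; norm_num at h1
      · exfalso; norm_num at h4
  rcases key with k | k | k
  · exact Or.inl (hQ.trans k)
  · exact Or.inr (Or.inl (hQ.trans k))
  · exact Or.inr (Or.inr (hQ.trans k))
theorem classify12 (a b c : ℤ) (h : b^2 - 4*a*c = 12) :
    QC (mat a b c) (mat 1 0 (-3)) ∨ QC (mat a b c) (mat (-1) 0 3) := by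
  obtain ⟨a', b', c', hQ, hd2, hcase⟩ := reduced_cases a b c 12 h (by norm_num)
  have key : QC (mat a' b' c') (mat 1 0 (-3)) ∨ QC (mat a' b' c') (mat (-1) 0 3) := by
    rcases hcase with ⟨ha0, hbD⟩ | ⟨ha', h4, h1, h3⟩
    · subst ha0
      exfalso
      obtain ⟨hbl, hbr⟩ := int_sq_le b' 4 (by norm_num) (by nlinarith)
      rcases (by omega : b' = -4 ∨ b' = -3 ∨ b' = -2 ∨ b' = -1 ∨ b' = 0 ∨ b' = 1 ∨ b' = 2 ∨ b' = 3 ∨ b' = 4) with rfl|rfl|rfl|rfl|rfl|rfl|rfl|rfl|rfl <;> norm_num at hbD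
    · obtain ⟨hal, har⟩ := int_sq_le a' 2 (by norm_num) (by nlinarith)
      obtain ⟨hbl, hbr⟩ := int_sq_le b' 2 (by norm_num) (by nlinarith)
      rcases (by omega : a' = -2 ∨ a' = -1 ∨ a' = 0 ∨ a' = 1 ∨ a' = 2) with rfl|rfl|rfl|rfl|rfl
      · exfalso; norm_num at h4
      · rcases (by omega : b' = -2 ∨ b' = -1 ∨ b' = 0 ∨ b' = 1 ∨ b' = 2) with rfl|rfl|rfl|rfl|rfl
        · exfalso; norm_num at h1
        · exfalso; norm_num at hd2; omega
        · norm_num at hd2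
          have hc : c' = 3 := by omega
          subst hc
          exact Or.inr (QC.refl _)
        · exfalso; norm_num at hd2; omega
        · exfalso; norm_num at h1
      · exact absurd rfl ha'
      · rcases (by omega : b' = -2 ∨ b' = -1 ∨ b' = 0 ∨ b' = 1 ∨ b' = 2) with rfl|rfl|rfl|rfl|rfl
        · exfalso; norm_num at h1
        · exfalso; norm_num at hd2; omega
        · norm_num at hd2
          have hc : c' = -3 := by omega
          subst hc
          exact Or.inl (QC.refl _)
        · exfalso; norm_num at hd2; omega
        · exfalso; norm_num at h1
      · exfalso; norm_num at h4
  rcases key with k | k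
  · exact Or.inl (hQ.trans k)
  · exact Or.inr (hQ.trans k)
theorem classify13 (a b c : ℤ) (h : b^2 - 4*a*c = 13) :
    QC (mat a b c) (mat 1 1 (-3)) := by
  obtain ⟨a', b', c', hQ, hd2, hcase⟩ := reduced_cases a b c 13 h (by norm_num)
  have key : QC (mat a' b' c') (mat 1 1 (-3)) := by
    rcases hcase with ⟨ha0, hbD⟩ | ⟨ha', h4, h1, h3⟩
    · subst ha0
      exfalso
      obtain ⟨hbl, hbr⟩ := int_sq_le b' 4 (by norm_num) (by nlinarith)
      rcases (by omega : b' = -4 ∨ b' = -3 ∨ b' = -2 ∨ b' = -1 ∨ b' = 0 ∨ b' = 1 ∨ b' = 2 ∨ b' = 3 ∨ b' = 4) with rfl|rfl|rfl|rfl|rfl|rfl|rfl|rfl|rfl <;> norm_num at hbD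
    · obtain ⟨hal, har⟩ := int_sq_le a' 2 (by norm_num) (by nlinarith)
      obtain ⟨hbl, hbr⟩ := int_sq_le b' 2 (by norm_num) (by nlinarith)
      rcases (by omega : a' = -2 ∨ a' = -1 ∨ a' = 0 ∨ a' = 1 ∨ a' = 2) with rfl|rfl|rfl|rfl|rfl
      · exfalso; norm_num at h4
      · rcases (by omega : b' = -2 ∨ b' = -1 ∨ b' = 0 ∨ b' = 1 ∨ b' = 2) with rfl|rfl|rfl|rfl|rfl
        · exfalso; norm_num at h1
        · norm_num at hd2
          have hc : c' = 3 := by omega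
          subst hc
          exact ch13c
        · exfalso; norm_num at hd2; omega
        · norm_num at hd2
          have hc : c' = 3 := by omega
          subst hc
          exact ch13b
        · exfalso; norm_num at h1
      · exact absurd rfl ha'
      · rcases (by omega : b' = -2 ∨ b' = -1 ∨ b' = 0 ∨ b' = 1 ∨ b' = 2) with rfl|rfl|rfl|rfl|rfl
        · exfalso; norm_num at h1
        · norm_num at hd2
          have hc : c' = -3 := by omega
          subst hc
          exact ch13a
        · exfalso; norm_num at hd2; omega
        · norm_num at hd2
          have hc : c' = -3 := by omega
          subst hc
          exact QC.refl _
        · exfalso; norm_num at h1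
      · exfalso; norm_num at h4
  exact hQ.trans key
theorem classify16 (a b c : ℤ) (h : b^2 - 4*a*c = 16) :
    QC (mat a b c) (mat 0 4 0) ∨ QC (mat a b c) (mat 0 4 1) ∨ QC (mat a b c) (mat 0 4 2) ∨ QC (mat a b c) (mat 0 4 3) := by
  obtain ⟨a', b', c', hQ, hd2, hcase⟩ := reduced_cases a b c 16 h (by norm_num)
  have key : QC (mat a' b' c') (mat 0 4 0) ∨ QC (mat a' b' c') (mat 0 4 1) ∨ QC (mat a' b' c') (mat 0 4 2) ∨ QC (mat a' b' c') (mat 0 4 3) := by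
    rcases hcase with ⟨ha0, hbD⟩ | ⟨ha', h4, h1, h3⟩
    · subst ha0
      have hb : b' = 4 ∨ b' = -4 := by
        have e : (b' - 4) * (b' + 4) = 0 := by linear_combination hbD
        rcases mul_eq_zero.mp e with e | e
        · exact Or.inl (by omega)
        · exact Or.inr (by omega)
      have he : 0 ≤ c' % 4 ∧ c' % 4 < 4 :=
        ⟨Int.emod_nonneg c' (by norm_num), Int.emod_lt_of_pos c' (by norm_num)⟩
      rcases (by omega : c' % 4 = 0 ∨ c' % 4 = 1 ∨ c' % 4 = 2 ∨ c' % 4 = 3) with h0 | h0 | h0 | h0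
      · exact Or.inl (QC.azero b' c' 4 0 (by norm_num) hb h0)
      · exact Or.inr (Or.inl (QC.azero b' c' 4 1 (by norm_num) hb h0))
      · exact Or.inr (Or.inr (Or.inl (QC.azero b' c' 4 2 (by norm_num) hb h0)))
      · exact Or.inr (Or.inr (Or.inr (QC.azero b' c' 4 3 (by norm_num) hb h0)))
    · obtain ⟨hal, har⟩ := int_sq_le a' 2 (by norm_num) (by nlinarith)
      obtain ⟨hbl, hbr⟩ := int_sq_le b' 2 (by norm_num) (by nlinarith)
      rcases (by omega : a' = -2 ∨ a' = -1 ∨ a' = 0 ∨ a' = 1 ∨ a' = 2) with rfl|rfl|rfl|rfl|rfl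
      · rcases (by omega : b' = -2 ∨ b' = -1 ∨ b' = 0 ∨ b' = 1 ∨ b' = 2) with rfl|rfl|rfl|rfl|rfl
        · exfalso; norm_num at hd2; omega
        · exfalso; norm_num at hd2; omega
        · norm_num at hd2
          have hc : c' = 2 := by omega
          subst hc
          exact Or.inr (Or.inr (Or.inl (ch16d)))
        · exfalso; norm_num at hd2; omega
        · exfalso; norm_num at hd2; omega
      · rcases (by omega : b' = -2 ∨ b' = -1 ∨ b' = 0 ∨ b' = 1 ∨ b' = 2) with rfl|rfl|rfl|rfl|rfl
        · exfalso; norm_num at h1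
        · exfalso; norm_num at hd2; omega
        · norm_num at hd2
          have hc : c' = 4 := by omega
          subst hc
          exact Or.inr (Or.inr (Or.inr (ch16b)))
        · exfalso; norm_num at hd2; omega
        · exfalso; norm_num at h1
      · exact absurd rfl ha'
      · rcases (by omega : b' = -2 ∨ b' = -1 ∨ b' = 0 ∨ b' = 1 ∨ b' = 2) with rfl|rfl|rfl|rfl|rfl
        · exfalso; norm_num at h1
        · exfalso; norm_num at hd2; omega
        · norm_num at hd2
          have hc : c' = -4 := by omega
          subst hc
          exact Or.inr (Or.inl (ch16a))
        · exfalso; norm_num at hd2; omega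
        · exfalso; norm_num at h1
      · rcases (by omega : b' = -2 ∨ b' = -1 ∨ b' = 0 ∨ b' = 1 ∨ b' = 2) with rfl|rfl|rfl|rfl|rfl
        · exfalso; norm_num at hd2; omega
        · exfalso; norm_num at hd2; omega
        · norm_num at hd2
          have hc : c' = -2 := by omega
          subst hc
          exact Or.inr (Or.inr (Or.inl (ch16c)))
        · exfalso; norm_num at hd2; omega
        · exfalso; norm_num at hd2; omega
  rcases key with k | k | k | k
  · exact Or.inl (hQ.trans k)
  · exact Or.inr (Or.inl (hQ.trans k))
  · exact Or.inr (Or.inr (Or.inl (hQ.trans k)))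
  · exact Or.inr (Or.inr (Or.inr (hQ.trans k)))

theorem dvd_of_padic_dvd (a b : ℤ) (hb : b ≠ 0)
    (h : ∀ (q : ℕ) [Fact q.Prime], (a : ℤ_[q]) ∣ (b : ℤ_[q])) : a ∣ b := by
  rcases eq_or_ne a 0 with rfl | ha
  · exfalso
    haveI : Fact (Nat.Prime 2) := ⟨by norm_num⟩
    have h2 := h 2
    rw [Int.cast_zero, zero_dvd_iff] at h2
    exact hb (by exact_mod_cast h2)
  · rw [← Int.natAbs_dvd_natAbs,
      ← Nat.factorization_le_iff_dvd (Int.natAbs_ne_zero.mpr ha) (Int.natAbs_ne_zero.mpr hb)]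
    refine (Finsupp.le_iff _ _).mpr fun q hq => ?_
    have hqp : q.Prime := Nat.prime_of_mem_primeFactors hq
    haveI : Fact q.Prime := ⟨hqp⟩
    set n := a.natAbs.factorization q with hn
    have h1 : ((q : ℤ)) ^ n ∣ a := by
      have h0 : q ^ n ∣ a.natAbs := Nat.ordProj_dvd a.natAbs q
      have h0' : ((q ^ n : ℕ) : ℤ) ∣ (a.natAbs : ℤ) := Int.natCast_dvd_natCast.mpr h0
      rw [Int.dvd_natAbs] at h0'
      exact_mod_cast h0'
    have h2 : ‖(a : ℤ_[q])‖ ≤ (q : ℝ) ^ (-n : ℤ) := PadicInt.norm_int_le_pow_iff_dvd.mpr h1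
    have h3 : ‖(b : ℤ_[q])‖ ≤ ‖(a : ℤ_[q])‖ := by
      obtain ⟨c, hc⟩ := h q
      rw [hc, norm_mul]
      exact mul_le_of_le_one_right (norm_nonneg _) (PadicInt.norm_le_one c)
    have h4 : ((q : ℤ)) ^ n ∣ b := PadicInt.norm_int_le_pow_iff_dvd.mp (le_trans h3 h2)
    have h5 : q ^ n ∣ b.natAbs := by
      have h6 := Int.natAbs_dvd_natAbs.mpr h4
      simpa [Int.natAbs_pow] using h6
    exact (Nat.Prime.pow_dvd_iff_le_factorization hqp (Int.natAbs_ne_zero.mpr hb)).mp h5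

theorem det_map_int {R : Type*} [CommRing R] (M : Matrix (Fin 2) (Fin 2) ℤ) :
    (M.map (Int.cast : ℤ → R)).det = (M.det : R) := by
  rw [show (Int.cast : ℤ → R) = ⇑(Int.castRingHom R) from rfl, ← RingHom.mapMatrix_apply,
    ← RingHom.map_det]

theorem qc_padic_det (q : ℕ) [Fact q.Prime] (M M' : Matrix (Fin 2) (Fin 2) ℤ)
    (h : QC (M.map (Int.cast : ℤ → ℤ_[q])) (M'.map (Int.cast : ℤ → ℤ_[q]))) :
    ((M.det : ℤ_[q]) ∣ (M'.det : ℤ_[q])) ∧ ((M'.det : ℤ_[q]) ∣ (M.det : ℤ_[q])) := by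
  obtain ⟨P, hu, hP⟩ := h
  have e : (M'.det : ℤ_[q]) = (P.det * P.det) * (M.det : ℤ_[q]) := by
    rw [← det_map_int, ← hP, Matrix.det_mul, Matrix.det_mul, Matrix.det_transpose, det_map_int]
    ring
  constructor
  · exact ⟨P.det * P.det, by rw [e]; ring⟩
  · obtain ⟨u, hu2⟩ := hu.mul hu
    refine ⟨(↑u⁻¹ : ℤ_[q]), ?_⟩
    rw [e, ← hu2, mul_comm ((u : ℤ_[q])) _, mul_assoc, Units.mul_inv, mul_one]

theorem val_transport {R : Type*} [CommRing R] (A P : Matrix (Fin 2) (Fin 2) R)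
    (x : Fin 2 → R) :
    x ⬝ᵥ ((Pᵀ * A * P) *ᵥ x) = (P *ᵥ x) ⬝ᵥ (A *ᵥ (P *ᵥ x)) := by
  simp only [dotProduct, Matrix.mulVec, Matrix.mul_apply, Fin.sum_univ_two,
    Matrix.transpose_apply]
  ring

theorem genus_contra (q : ℕ) [Fact q.Prime] (k : ℕ) (C C' : Matrix (Fin 2) (Fin 2) ℤ)
    (v : ZMod (q^k))
    (h1 : ∀ x : Fin 2 → ZMod (q^k), ¬ x ⬝ᵥ ((C.map (Int.cast : ℤ → ZMod (q^k))) *ᵥ x) = v)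
    (h2 : ∃ x : Fin 2 → ZMod (q^k), x ⬝ᵥ ((C'.map (Int.cast : ℤ → ZMod (q^k))) *ᵥ x) = v)
    (h : QC (C.map (Int.cast : ℤ → ℤ_[q])) (C'.map (Int.cast : ℤ → ℤ_[q]))) : False := by
  have hmap := h.map (PadicInt.toZModPow (p := q) k)
  rw [Matrix.map_map, Matrix.map_map] at hmap
  have hcomp : (⇑(PadicInt.toZModPow (p := q) k) ∘ (Int.cast : ℤ → ℤ_[q]))
      = (Int.cast : ℤ → ZMod (q^k)) := by
    have e : (PadicInt.toZModPow (p := q) k).comp (Int.castRingHom ℤ_[q])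
        = Int.castRingHom (ZMod (q^k)) := RingHom.ext_int _ _
    funext x
    exact RingHom.congr_fun e x
  rw [hcomp] at hmap
  obtain ⟨P, hu, hP⟩ := hmap
  obtain ⟨x, hx⟩ := h2
  refine h1 (P *ᵥ x) ?_
  rw [← val_transport, hP, hx]

/-- An indefinite even lattice of rank 2 and discriminant at most 16 is alone in its genus:
if `M` and `M'` are congruent over the `q`-adic integers for every prime `q`, then they are
congruent over `ℤ`. -/
theorem stmt_12 (M M' : Matrix (Fin 2) (Fin 2) ℤ)
    (hs : M.IsSymm) (hs' : M'.IsSymm)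
    (he : ∀ i, Even (M i i)) (he' : ∀ i, Even (M' i i))
    (hd : M.det < 0) (hd' : M'.det < 0) (hbound : |M.det| ≤ 16)
    (hgenus : ∀ (q : ℕ) [Fact q.Prime], ∃ P : Matrix (Fin 2) (Fin 2) ℤ_[q],
      IsUnit P.det ∧
        Pᵀ * M.map (Int.cast : ℤ → ℤ_[q]) * P = M'.map (Int.cast : ℤ → ℤ_[q])) :
    ∃ P : Matrix (Fin 2) (Fin 2) ℤ, IsUnit P.det ∧ Pᵀ * M * P = M' := by
  -- genus as QC
  have hg : ∀ (q : ℕ) [Fact q.Prime],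
      QC (M.map (Int.cast : ℤ → ℤ_[q])) (M'.map (Int.cast : ℤ → ℤ_[q])) := fun q _ => hgenus q
  -- determinant equality
  have hdeq : M.det = M'.det := by
    have h1 : M.det ∣ M'.det :=
      dvd_of_padic_dvd _ _ (ne_of_lt hd') (fun q _ => (qc_padic_det q M M' (hg q)).1)
    have h2 : M'.det ∣ M.det :=
      dvd_of_padic_dvd _ _ (ne_of_lt hd) (fun q _ => (qc_padic_det q M M' (hg q)).2)
    have h3 := Int.dvd_antisymm (by linarith : (0:ℤ) ≤ -M.det) (by linarith : (0:ℤ) ≤ -M'.det)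
      ((neg_dvd.mpr (dvd_neg.mpr h1))) ((neg_dvd.mpr (dvd_neg.mpr h2)))
    linarith
  -- decompose M
  obtain ⟨a, ha⟩ := he 0
  obtain ⟨cc, hcc⟩ := he 1
  obtain ⟨b, hb⟩ : ∃ b, M 0 1 = b := ⟨_, rfl⟩
  have hsym : M 1 0 = M 0 1 := by
    have := congrFun (congrFun hs 1) 0
    simpa [Matrix.transpose_apply] using this.symm
  have hM : M = mat a b cc := by
    ext i j
    fin_cases i <;> fin_cases j <;> simp [mat] <;> omega
  obtain ⟨a', ha'⟩ := he' 0
  obtain ⟨cc', hcc'⟩ := he' 1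
  obtain ⟨b', hb'⟩ : ∃ b, M' 0 1 = b := ⟨_, rfl⟩
  have hsym' : M' 1 0 = M' 0 1 := by
    have := congrFun (congrFun hs' 1) 0
    simpa [Matrix.transpose_apply] using this.symm
  have hM' : M' = mat a' b' cc' := by
    ext i j
    fin_cases i <;> fin_cases j <;> simp [mat] <;> omega
  subst hM hM'
  rw [mat_det] at hd hd' hbound
  rw [mat_det, mat_det] at hdeq
  -- discriminant
  have hD1 : 0 < b^2 - 4*(a*cc) := by linarith
  have hD2 : b^2 - 4*(a*cc) ≤ 16 := by
    rw [abs_of_neg hd] at hbound; linarith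
  have hDeq : b'^2 - 4*(a'*cc') = b^2 - 4*(a*cc) := by linarith
  have hmod : (b^2 - 4*(a*cc)) % 4 = 0 ∨ (b^2 - 4*(a*cc)) % 4 = 1 := by
    rcases Int.even_or_odd b with ⟨t, rfl⟩ | ⟨t, rfl⟩
    · have e : (t+t)^2 - 4*(a*cc) = 4*(t*t - a*cc) := by ring
      rw [e]; left; omega
    · have e : (2*t+1)^2 - 4*(a*cc) = 4*(t*t + t - a*cc) + 1 := by ring
      rw [e]; right; omega
  have hDval : b^2 - 4*(a*cc) = 1 ∨ b^2 - 4*(a*cc) = 4 ∨ b^2 - 4*(a*cc) = 5 ∨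
      b^2 - 4*(a*cc) = 8 ∨ b^2 - 4*(a*cc) = 9 ∨ b^2 - 4*(a*cc) = 12 ∨
      b^2 - 4*(a*cc) = 13 ∨ b^2 - 4*(a*cc) = 16 := by omega
  -- helper to turn classification into p-adic congruence of canonical forms
  have link : ∀ (q : ℕ) [Fact q.Prime] (C C' : Matrix (Fin 2) (Fin 2) ℤ),
      QC (mat a b cc) C → QC (mat a' b' cc') C' →
      QC (C.map (Int.cast : ℤ → ℤ_[q])) (C'.map (Int.cast : ℤ → ℤ_[q])) := by
    intro q _ C C' h1 h2
    exact ((h1.map (Int.castRingHom ℤ_[q])).symm.trans (hg q)).trans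
      (h2.map (Int.castRingHom ℤ_[q]))
  rcases hDval with hD | hD | hD | hD | hD | hD | hD | hD
  · exact (classify1 a b cc (by linarith)).trans (classify1 a' b' cc' (by linarith)).symm
  · rcases classify4 a b cc (by linarith) with k1 | k1 <;>
      rcases classify4 a' b' cc' (by linarith) with k2 | k2
    · exact k1.trans k2.symm
    · exfalso
      have hC := link 2 (mat 0 2 0) (mat 0 2 1) k1 k2
      exact genus_contra 2 2 (mat 0 2 0) (mat 0 2 1) ((2 : ZMod (2^2))) (by decide) ⟨(![0,1] : Fin 2 → ZMod (2^2)), by decide⟩ hC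
    · exfalso
      have hC := link 2 (mat 0 2 1) (mat 0 2 0) k1 k2
      exact genus_contra 2 2 (mat 0 2 0) (mat 0 2 1) ((2 : ZMod (2^2))) (by decide) ⟨(![0,1] : Fin 2 → ZMod (2^2)), by decide⟩ hC.symm
    · exact k1.trans k2.symm
  · exact (classify5 a b cc (by linarith)).trans (classify5 a' b' cc' (by linarith)).symm
  · exact (classify8 a b cc (by linarith)).trans (classify8 a' b' cc' (by linarith)).symm
  · rcases classify9 a b cc (by linarith) with k1 | k1 | k1 <;>
      rcases classify9 a' b' cc' (by linarith) with k2 | k2 | k2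
    · exact k1.trans k2.symm
    · exfalso
      have hC := link 3 (mat 0 3 0) (mat 0 3 1) k1 k2
      exact genus_contra 3 1 (mat 0 3 0) (mat 0 3 1) ((2 : ZMod (3^1))) (by decide) ⟨(![0,1] : Fin 2 → ZMod (3^1)), by decide⟩ hC
    · exfalso
      have hC := link 3 (mat 0 3 0) (mat 0 3 2) k1 k2
      exact genus_contra 3 1 (mat 0 3 0) (mat 0 3 2) ((1 : ZMod (3^1))) (by decide) ⟨(![0,1] : Fin 2 → ZMod (3^1)), by decide⟩ hC
    · exfalso
      have hC := link 3 (mat 0 3 1) (mat 0 3 0) k1 k2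
      exact genus_contra 3 1 (mat 0 3 0) (mat 0 3 1) ((2 : ZMod (3^1))) (by decide) ⟨(![0,1] : Fin 2 → ZMod (3^1)), by decide⟩ hC.symm
    · exact k1.trans k2.symm
    · exfalso
      have hC := link 3 (mat 0 3 1) (mat 0 3 2) k1 k2
      exact genus_contra 3 1 (mat 0 3 1) (mat 0 3 2) ((1 : ZMod (3^1))) (by decide) ⟨(![0,1] : Fin 2 → ZMod (3^1)), by decide⟩ hC
    · exfalso
      have hC := link 3 (mat 0 3 2) (mat 0 3 0) k1 k2
      exact genus_contra 3 1 (mat 0 3 0) (mat 0 3 2) ((1 : ZMod (3^1))) (by decide) ⟨(![0,1] : Fin 2 → ZMod (3^1)), by decide⟩ hC.symm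
    · exfalso
      have hC := link 3 (mat 0 3 2) (mat 0 3 1) k1 k2
      exact genus_contra 3 1 (mat 0 3 1) (mat 0 3 2) ((1 : ZMod (3^1))) (by decide) ⟨(![0,1] : Fin 2 → ZMod (3^1)), by decide⟩ hC.symm
    · exact k1.trans k2.symm
  · rcases classify12 a b cc (by linarith) with k1 | k1 <;>
      rcases classify12 a' b' cc' (by linarith) with k2 | k2
    · exact k1.trans k2.symm
    · exfalso
      have hC := link 3 (mat 1 0 (-3)) (mat (-1) 0 3) k1 k2
      exact genus_contra 3 1 (mat 1 0 (-3)) (mat (-1) 0 3) 1 (by decide) ⟨![1,0], by decide⟩ hC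
    · exfalso
      have hC := link 3 (mat (-1) 0 3) (mat 1 0 (-3)) k1 k2
      exact genus_contra 3 1 (mat 1 0 (-3)) (mat (-1) 0 3) 1 (by decide) ⟨![1,0], by decide⟩ hC.symm
    · exact k1.trans k2.symm
  · exact (classify13 a b cc (by linarith)).trans (classify13 a' b' cc' (by linarith)).symm
  · rcases classify16 a b cc (by linarith) with k1 | k1 | k1 | k1 <;>
      rcases classify16 a' b' cc' (by linarith) with k2 | k2 | k2 | k2
    · exact k1.trans k2.symm
    · exfalso
      have hC := link 2 (mat 0 4 0) (mat 0 4 1) k1 k2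
      exact genus_contra 2 3 (mat 0 4 0) (mat 0 4 1) ((2 : ZMod (2^3))) (by decide) ⟨(![0,1] : Fin 2 → ZMod (2^3)), by decide⟩ hC
    · exfalso
      have hC := link 2 (mat 0 4 0) (mat 0 4 2) k1 k2
      exact genus_contra 2 3 (mat 0 4 0) (mat 0 4 2) ((4 : ZMod (2^3))) (by decide) ⟨(![0,1] : Fin 2 → ZMod (2^3)), by decide⟩ hC
    · exfalso
      have hC := link 2 (mat 0 4 0) (mat 0 4 3) k1 k2
      exact genus_contra 2 3 (mat 0 4 0) (mat 0 4 3) ((6 : ZMod (2^3))) (by decide) ⟨(![0,1] : Fin 2 → ZMod (2^3)), by decide⟩ hC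
    · exfalso
      have hC := link 2 (mat 0 4 1) (mat 0 4 0) k1 k2
      exact genus_contra 2 3 (mat 0 4 0) (mat 0 4 1) ((2 : ZMod (2^3))) (by decide) ⟨(![0,1] : Fin 2 → ZMod (2^3)), by decide⟩ hC.symm
    · exact k1.trans k2.symm
    · exfalso
      have hC := link 2 (mat 0 4 1) (mat 0 4 2) k1 k2
      exact genus_contra 2 3 (mat 0 4 1) (mat 0 4 2) ((4 : ZMod (2^3))) (by decide) ⟨(![0,1] : Fin 2 → ZMod (2^3)), by decide⟩ hC
    · exfalso
      have hC := link 2 (mat 0 4 1) (mat 0 4 3) k1 k2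
      exact genus_contra 2 3 (mat 0 4 1) (mat 0 4 3) ((6 : ZMod (2^3))) (by decide) ⟨(![0,1] : Fin 2 → ZMod (2^3)), by decide⟩ hC
    · exfalso
      have hC := link 2 (mat 0 4 2) (mat 0 4 0) k1 k2
      exact genus_contra 2 3 (mat 0 4 0) (mat 0 4 2) ((4 : ZMod (2^3))) (by decide) ⟨(![0,1] : Fin 2 → ZMod (2^3)), by decide⟩ hC.symm
    · exfalso
      have hC := link 2 (mat 0 4 2) (mat 0 4 1) k1 k2
      exact genus_contra 2 3 (mat 0 4 1) (mat 0 4 2) ((4 : ZMod (2^3))) (by decide) ⟨(![0,1] : Fin 2 → ZMod (2^3)), by decide⟩ hC.symm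
    · exact k1.trans k2.symm
    · exfalso
      have hC := link 2 (mat 0 4 2) (mat 0 4 3) k1 k2
      exact genus_contra 2 3 (mat 0 4 2) (mat 0 4 3) ((6 : ZMod (2^3))) (by decide) ⟨(![0,1] : Fin 2 → ZMod (2^3)), by decide⟩ hC
    · exfalso
      have hC := link 2 (mat 0 4 3) (mat 0 4 0) k1 k2
      exact genus_contra 2 3 (mat 0 4 0) (mat 0 4 3) ((6 : ZMod (2^3))) (by decide) ⟨(![0,1] : Fin 2 → ZMod (2^3)), by decide⟩ hC.symm
    · exfalso
      have hC := link 2 (mat 0 4 3) (mat 0 4 1) k1 k2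
      exact genus_contra 2 3 (mat 0 4 1) (mat 0 4 3) ((6 : ZMod (2^3))) (by decide) ⟨(![0,1] : Fin 2 → ZMod (2^3)), by decide⟩ hC.symm
    · exfalso
      have hC := link 2 (mat 0 4 3) (mat 0 4 2) k1 k2
      exact genus_contra 2 3 (mat 0 4 2) (mat 0 4 3) ((6 : ZMod (2^3))) (by decide) ⟨(![0,1] : Fin 2 → ZMod (2^3)), by decide⟩ hC.symm
    · exact k1.trans k2.symm
end

section
/- Let p be an odd prime, let M ∈ M_{p−1}(ℤ) be a symmetric matrix with det M ≠ 0, and let g ∈ GL_{p−1}(ℤ) with g ≠ id, g^p = id, and gᵀMg = M (i.e. the rank-(p−1) lattice with Gram matrix M carries a non-trivial isometry of order p). Then |det M| / p^{p−2} is the square of a rational number. -/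
open Matrix Finset

theorem skew_det_isSquare : ∀ (N : ℕ) (n : Type) [DecidableEq n] [Fintype n],
    Fintype.card n = N → ∀ S : Matrix n n ℚ, Sᵀ = -S → IsSquare S.det := by
  intro N
  induction N using Nat.strong_induction_on with
  | _ N IH =>
  intro n _ _ hcard S hskew
  have hskew' : ∀ i j, S j i = - S i j := by
    intro i j
    have := congrFun (congrFun hskew i) j
    simpa [Matrix.transpose_apply] using this
  have hdiag : ∀ i, S i i = 0 := by
    intro i
    have := hskew' i i
    linarith
  rcases isEmpty_or_nonempty n with hn | hn
  · simp [Matrix.det_isEmpty]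
  by_cases hzero : ∀ i j : n, S i j = 0
  · have : S = 0 := by ext i j; exact hzero i j
    rw [this, Matrix.det_zero]
    exact ⟨0, by ring⟩
  push_neg at hzero
  obtain ⟨i0, j0, ha⟩ := hzero
  have hij : i0 ≠ j0 := by rintro rfl; exact ha (hdiag i0)
  set a := S i0 j0 with ha_def
  set c1 : n → ℚ := fun y => if y = i0 ∨ y = j0 then 0 else S j0 y / a with hc1
  set c2 : n → ℚ := fun y => if y = i0 ∨ y = j0 then 0 else -(S i0 y) / a with hc2
  set C : Matrix n n ℚ := Matrix.of (fun x y =>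
    (if x = i0 then c1 y else 0) + (if x = j0 then c2 y else 0)) with hC
  have hmulC : ∀ (W : Matrix n n ℚ) (x y : n),
      (W * C) x y = W x i0 * c1 y + W x j0 * c2 y := by
    intro W x y
    simp only [Matrix.mul_apply, hC, Matrix.of_apply, mul_add]
    rw [Finset.sum_add_distrib]
    congr 1
    · rw [Finset.sum_congr rfl (fun b _ => by rw [mul_ite, mul_zero]),
        Finset.sum_ite_eq' Finset.univ i0 (fun b => W x b * c1 y)]
      simp
    · rw [Finset.sum_congr rfl (fun b _ => by rw [mul_ite, mul_zero]),
        Finset.sum_ite_eq' Finset.univ j0 (fun b => W x b * c2 y)]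
      simp
  have hCmul : ∀ (W : Matrix n n ℚ) (x y : n),
      (Cᵀ * W) x y = c1 x * W i0 y + c2 x * W j0 y := by
    intro W x y
    simp only [Matrix.mul_apply, Matrix.transpose_apply, hC, Matrix.of_apply, add_mul]
    rw [Finset.sum_add_distrib]
    congr 1
    · rw [Finset.sum_congr rfl (fun b _ => by rw [ite_mul, zero_mul]),
        Finset.sum_ite_eq' Finset.univ i0 (fun b => c1 x * W b y)]
      simp
    · rw [Finset.sum_congr rfl (fun b _ => by rw [ite_mul, zero_mul]),
        Finset.sum_ite_eq' Finset.univ j0 (fun b => c2 x * W b y)]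
      simp
  have hc1i0 : c1 i0 = 0 := by simp [hc1]
  have hc1j0 : c1 j0 = 0 := by simp [hc1]
  have hc2i0 : c2 i0 = 0 := by simp [hc2]
  have hc2j0 : c2 j0 = 0 := by simp [hc2]
  set P : Matrix n n ℚ := 1 + C with hP
  have hCC : C * C = 0 := by
    ext x y
    rw [Matrix.zero_apply, hmulC C x y]
    have h1 : C x i0 = 0 := by simp [hC, hc1i0, hc2i0]
    have h2 : C x j0 = 0 := by simp [hC, hc1j0, hc2j0]
    rw [h1, h2]; ring
  have hPinv : P * (1 - C) = 1 := by
    have h : (1 + C) * (1 - C) = 1 - C * C := by noncomm_ring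
    rw [hP, h, hCC, sub_zero]
  have hdetP : P.det ≠ 0 := by
    intro h
    have h2 := congrArg Matrix.det hPinv
    rw [Matrix.det_mul, h, zero_mul, Matrix.det_one] at h2
    exact zero_ne_one h2
  set U : Matrix n n ℚ := S * P with hU
  have hUapp : ∀ x y, U x y = S x y + S x i0 * c1 y + S x j0 * c2 y := by
    intro x y
    rw [hU, hP, mul_add, mul_one, Matrix.add_apply, hmulC]
    ring
  have hUi0 : ∀ y, U i0 y = if y = i0 ∨ y = j0 then S i0 y else 0 := by
    intro y
    rw [hUapp]
    by_cases h : y = i0 ∨ y = j0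
    · simp [hc1, hc2, h]
    · rw [if_neg h, hc1, hc2]
      simp only [if_neg h]
      rw [hdiag i0]
      field_simp
      rw [← ha_def]
      ring
  have hUj0 : ∀ y, U j0 y = if y = i0 ∨ y = j0 then S j0 y else 0 := by
    intro y
    rw [hUapp]
    by_cases h : y = i0 ∨ y = j0
    · simp [hc1, hc2, h]
    · rw [if_neg h, hc1, hc2]
      simp only [if_neg h]
      rw [hdiag j0, hskew' i0 j0]
      field_simp
      rw [← ha_def]
      ring
  set T : Matrix n n ℚ := Pᵀ * U with hT
  have hTdet : T.det = S.det * (P.det * P.det) := by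
    rw [hT, hU, Matrix.det_mul, Matrix.det_mul, Matrix.det_transpose]
    ring
  have hTskew : Tᵀ = -T := by
    rw [hT, hU, Matrix.transpose_mul, Matrix.transpose_mul, Matrix.transpose_transpose, hskew]
    rw [Matrix.mul_neg, Matrix.neg_mul, Matrix.mul_assoc]
  have hTskew' : ∀ x y, T y x = - T x y := by
    intro x y
    have := congrFun (congrFun hTskew x) y
    simpa [Matrix.transpose_apply] using this
  have hTapp : ∀ x y, T x y = U x y + c1 x * U i0 y + c2 x * U j0 y := by
    intro x y
    rw [hT, hP, Matrix.transpose_add, Matrix.transpose_one, Matrix.add_mul, Matrix.one_mul,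
      Matrix.add_apply, hCmul]
    ring
  have hTi0 : ∀ y, ¬(y = i0 ∨ y = j0) → T i0 y = 0 := by
    intro y hy
    rw [hTapp, hc1i0, hc2i0, hUi0, if_neg hy]
    ring
  have hTj0 : ∀ y, ¬(y = i0 ∨ y = j0) → T j0 y = 0 := by
    intro y hy
    rw [hTapp, hc1j0, hc2j0, hUj0, if_neg hy]
    ring
  have hTi0i0 : T i0 i0 = 0 := by
    rw [hTapp, hc1i0, hc2i0, hUi0, if_pos (Or.inl rfl), hdiag]
    ring
  have hTi0j0 : T i0 j0 = a := by
    rw [hTapp, hc1i0, hc2i0, hUi0, if_pos (Or.inr rfl)]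
    ring
  have hTj0i0 : T j0 i0 = -a := by
    rw [hTskew' i0 j0, hTi0j0]
  have hTj0j0 : T j0 j0 = 0 := by
    rw [hTapp, hc1j0, hc2j0, hUj0, if_pos (Or.inr rfl), hdiag]
    ring
  -- index equivalence
  let e0 : Fin 2 ≃ {x : n // x = i0 ∨ x = j0} :=
  { toFun := fun k => if k = 0 then ⟨i0, Or.inl rfl⟩ else ⟨j0, Or.inr rfl⟩
    invFun := fun x => if x.1 = i0 then 0 else 1
    left_inv := by
      intro k
      fin_cases k
      · simp
      · simp [Ne.symm hij]
    right_inv := by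
      rintro ⟨x, hx | hx⟩ <;> subst hx
      · simp
      · simp [Ne.symm hij] }
  let m := {x : n // ¬(x = i0 ∨ x = j0)}
  let e : (Fin 2 ⊕ m) ≃ n :=
    (Equiv.sumCongr e0 (Equiv.refl m)).trans (Equiv.sumCompl (fun x => x = i0 ∨ x = j0))
  have he_inl0 : e (Sum.inl 0) = i0 := rfl
  have he_inl1 : e (Sum.inl 1) = j0 := rfl
  have he_inr : ∀ z : m, e (Sum.inr z) = z.1 := fun z => rfl
  set D : Matrix m m ℚ := Matrix.of (fun z w => T z.1 w.1) with hD
  have hblock : T.submatrix e e = Matrix.fromBlocks !![0, a; -a, 0] 0 0 D := by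
    ext x y
    rcases x with x | x <;> rcases y with y | y
    · fin_cases x <;> fin_cases y <;>
        simp [Matrix.submatrix_apply, he_inl0, he_inl1, hTi0i0, hTi0j0, hTj0i0, hTj0j0]
    · fin_cases x <;>
        simp [Matrix.submatrix_apply, he_inl0, he_inl1, he_inr, hTi0 y.1 y.2, hTj0 y.1 y.2]
    · have hy : e (Sum.inl y) = i0 ∨ e (Sum.inl y) = j0 := by
        fin_cases y
        · exact Or.inl he_inl0
        · exact Or.inr he_inl1
      have h0 : T x.1 (e (Sum.inl y)) = 0 := by
        rcases hy with h | h <;> rw [h]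
        · rw [hTskew' i0 x.1, hTi0 x.1 x.2, neg_zero]
        · rw [hTskew' j0 x.1, hTj0 x.1 x.2, neg_zero]
      simpa [Matrix.submatrix_apply, he_inr] using h0
    · simp [Matrix.submatrix_apply, he_inr, hD]
  have hdetT : T.det = a * a * D.det := by
    rw [← Matrix.det_submatrix_equiv_self e, hblock, Matrix.det_fromBlocks_zero₂₁,
      Matrix.det_fin_two_of]
    ring
  have hDskew : Dᵀ = -D := by
    ext z w
    simp only [Matrix.transpose_apply, hD, Matrix.of_apply, Matrix.neg_apply]
    exact hTskew' z.1 w.1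
  have hcardm : 2 + Fintype.card m = N := by
    rw [← hcard, ← Fintype.card_congr e]
    simp [Fintype.card_sum]
  have hN2 : Fintype.card m < N := by omega
  obtain ⟨d, hd⟩ := IH (Fintype.card m) hN2 m rfl D hDskew
  refine ⟨a * d / P.det, ?_⟩
  have h1 : S.det * (P.det * P.det) = (a * d) * (a * d) := by
    rw [← hTdet, hdetT, hd]; ring
  field_simp
  linear_combination h1

open Matrix Polynomial

theorem charpoly_eq_cyclotomic {p : ℕ} (hp : p.Prime)
    (B : Matrix (Fin (p - 1)) (Fin (p - 1)) ℚ) (hB1 : B ≠ 1) (hBp : B ^ p = 1) :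
    B.charpoly = Polynomial.cyclotomic p ℚ := by
  have hcard : 0 < p - 1 := by have := hp.two_le; omega
  haveI : Nonempty (Fin (p - 1)) := ⟨⟨0, hcard⟩⟩
  have hint : IsIntegral ℚ B := ⟨B.charpoly, B.charpoly_monic, B.aeval_self_charpoly⟩
  have hdvd : minpoly ℚ B ∣ (Polynomial.X ^ p - 1 : ℚ[X]) := by
    apply minpoly.dvd
    simp [map_sub, map_pow, hBp]
  have hfact : (Polynomial.X ^ p - 1 : ℚ[X]) =
      (Polynomial.X - 1) * Polynomial.cyclotomic p ℚ := by
    rw [← Polynomial.prod_cyclotomic_eq_X_pow_sub_one hp.pos ℚ, Nat.Prime.divisors hp,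
      Finset.prod_pair hp.one_lt.ne, Polynomial.cyclotomic_one]
  have hirr : Irreducible (Polynomial.cyclotomic p ℚ) :=
    Polynomial.cyclotomic.irreducible_rat hp.pos
  have hΦdvd : Polynomial.cyclotomic p ℚ ∣ B.charpoly := by
    by_cases hc : Polynomial.cyclotomic p ℚ ∣ minpoly ℚ B
    · exact hc.trans (Matrix.minpoly_dvd_charpoly B)
    exfalso
    have hcop : IsCoprime (minpoly ℚ B) (Polynomial.cyclotomic p ℚ) :=
      ((hirr.coprime_iff_not_dvd).mpr hc).symm
    have h2 : minpoly ℚ B ∣ (Polynomial.X - 1 : ℚ[X]) := by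
      refine hcop.dvd_of_dvd_mul_right ?_
      rw [← hfact]; exact hdvd
    have hμmonic : (minpoly ℚ B).Monic := minpoly.monic hint
    have hX1monic : (Polynomial.X - 1 : ℚ[X]).Monic := by
      simpa using Polynomial.monic_X_sub_C (1 : ℚ)
    have hdegpos : 0 < (minpoly ℚ B).natDegree := minpoly.natDegree_pos hint
    have hdegX1 : (Polynomial.X - 1 : ℚ[X]).natDegree = 1 := by
      simpa using Polynomial.natDegree_X_sub_C (1 : ℚ)
    have hassoc : Associated (minpoly ℚ B) (Polynomial.X - 1 : ℚ[X]) :=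
      Polynomial.associated_of_dvd_of_natDegree_le h2 hX1monic.ne_zero
        (by rw [hdegX1]; omega)
    have hμeq : minpoly ℚ B = Polynomial.X - 1 :=
      Polynomial.eq_of_monic_of_associated hμmonic hX1monic hassoc
    have haeval := minpoly.aeval ℚ B
    rw [hμeq] at haeval
    simp only [map_sub, Polynomial.aeval_X, _root_.map_one, sub_eq_zero] at haeval
    exact hB1 haeval
  have hmonicΦ : (Polynomial.cyclotomic p ℚ).Monic := Polynomial.cyclotomic.monic p ℚ
  have hdeg : B.charpoly.natDegree ≤ (Polynomial.cyclotomic p ℚ).natDegree := by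
    rw [Matrix.charpoly_natDegree_eq_dim, Polynomial.natDegree_cyclotomic,
      Nat.totient_prime hp, Fintype.card_fin]
  exact (Polynomial.eq_of_monic_of_associated hmonicΦ B.charpoly_monic
    (Polynomial.associated_of_dvd_of_natDegree_le hΦdvd B.charpoly_monic.ne_zero hdeg)).symm

/-- If a lattice of rank `p - 1` (with Gram matrix `M`) carries a non-trivial isometry `g` of
order `p`, where `p` is an odd prime, then `|det M| / p^(p-2)` is a square in `ℚ`. -/
theorem stmt_13 (p : ℕ) (hp : p.Prime) (hodd : Odd p)
    (M : Matrix (Fin (p - 1)) (Fin (p - 1)) ℤ) (hs : M.IsSymm) (hdet : M.det ≠ 0)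
    (g : Matrix (Fin (p - 1)) (Fin (p - 1)) ℤ) (hg1 : g ≠ 1) (hgp : g ^ p = 1)
    (hiso : gᵀ * M * g = M) :
    ∃ q : ℚ, (|M.det| : ℚ) / (p : ℚ) ^ (p - 2) = q ^ 2 := by
  haveI : Fact p.Prime := ⟨hp⟩
  have hp2 := hp.two_le
  have hpne2 : p ≠ 2 := by rintro rfl; exact absurd hodd (by decide)
  have hp3 : 3 ≤ p := by omega
  have hs' : Mᵀ = M := hs
  -- basic power identities over ℤ
  have hgg : g * g ^ (p - 1) = g ^ p := by
    rw [← pow_succ']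
    congr 1
    omega
  have hgtM : gᵀ * M = M * g ^ (p - 1) := by
    calc gᵀ * M = gᵀ * M * (g * g ^ (p - 1)) := by rw [hgg, hgp, mul_one]
    _ = (gᵀ * M * g) * g ^ (p - 1) := by rw [Matrix.mul_assoc (gᵀ * M)]
    _ = M * g ^ (p - 1) := by rw [hiso]
  have hpowk : ∀ k : ℕ, (gᵀ) ^ k * M = M * g ^ (k * (p - 1)) := by
    intro k
    induction k with
    | zero => simp
    | succ k ih =>
      rw [pow_succ', Matrix.mul_assoc, ih, ← Matrix.mul_assoc, hgtM, Matrix.mul_assoc,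
        ← pow_add]
      congr 2
      ring
  have hgt2 : (gᵀ) ^ (p - 1) * M = M * g := by
    rw [hpowk (p - 1)]
    have h3 : (p - 1) * (p - 1) = p * (p - 2) + 1 := by
      obtain ⟨t, rfl⟩ : ∃ t, p = t + 2 := ⟨p - 2, by omega⟩
      simp only [Nat.add_sub_cancel]
      have h4 : t + 2 - 1 = t + 1 := by omega
      rw [h4]; ring
    rw [h3, pow_succ, pow_mul, hgp, one_pow, one_mul]
  set S : Matrix (Fin (p - 1)) (Fin (p - 1)) ℤ := M * g - M * g ^ (p - 1) with hS
  have hSskew : Sᵀ = -S := by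
    rw [hS, Matrix.transpose_sub, Matrix.transpose_mul, Matrix.transpose_mul,
      Matrix.transpose_pow, hs', hgtM, hgt2, neg_sub]
  have hdetg : g.det = 1 := by
    have h1 : g.det ^ p = 1 := by rw [← Matrix.det_pow, hgp, Matrix.det_one]
    have h2 : g.det * g.det ^ (p - 1) = 1 := by
      rw [← pow_succ', show p - 1 + 1 = p by omega, h1]
    rcases Int.isUnit_iff.mp (IsUnit.of_mul_eq_one _ h2) with h | h
    · exact h
    · exfalso
      rw [h, Odd.neg_one_pow hodd] at h1
      norm_num at h1
  -- move to ℚ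
  set φ : Matrix (Fin (p - 1)) (Fin (p - 1)) ℤ →+* Matrix (Fin (p - 1)) (Fin (p - 1)) ℚ := (Int.castRingHom ℚ).mapMatrix with hφ
  set A := φ g with hA
  have hinj : Function.Injective φ := by
    intro X Y h
    ext i j
    have h2 := congrFun (congrFun h i) j
    simp only [hφ, RingHom.mapMatrix_apply, Matrix.map_apply, eq_intCast] at h2
    exact_mod_cast h2
  have hAp : A ^ p = 1 := by rw [hA, ← _root_.map_pow, hgp, _root_.map_one]
  have hA2 : A ^ 2 ≠ 1 := by
    intro h
    apply hg1
    apply hinj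
    rw [_root_.map_one]
    obtain ⟨m, hm⟩ := hodd
    have h1 : A ^ (p + 1) = 1 := by
      rw [show p + 1 = 2 * (m + 1) by omega, pow_mul, h, one_pow]
    have h2 : A ^ (p + 1) = A := by rw [pow_succ, hAp, one_mul]
    rw [← hA, ← h2, h1]
  have hA2p : (A ^ 2) ^ p = 1 := by rw [← pow_mul, mul_comm, pow_mul, hAp, one_pow]
  have hchar : (A ^ 2).charpoly = Polynomial.cyclotomic p ℚ :=
    charpoly_eq_cyclotomic hp _ hA2 hA2p
  have hevalchar : ((A ^ 2).charpoly).eval 1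
      = ((1 : Matrix (Fin (p - 1)) (Fin (p - 1)) ℚ) - A ^ 2).det := by
    rw [Matrix.charpoly, _root_.eval_det, Matrix.matPolyEquiv_charmatrix,
      Polynomial.eval_sub, Polynomial.eval_X, Polynomial.eval_C]
    rw [show (scalar (Fin (p - 1))) (1 : ℚ) = 1 from _root_.map_one _]
  have hdet1 : ((1 : Matrix (Fin (p - 1)) (Fin (p - 1)) ℚ) - A ^ 2).det = p := by
    rw [← hevalchar, hchar, Polynomial.eval_one_cyclotomic_prime]
  have hdet2 : (A ^ 2 - 1).det = (p : ℚ) := by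
    rw [show (A ^ 2 - (1 : Matrix (Fin (p - 1)) (Fin (p - 1)) ℚ)) = -(1 - A ^ 2) by
      rw [neg_sub]]
    rw [Matrix.det_neg, hdet1, Fintype.card_fin]
    have heven : Even (p - 1) := Nat.Odd.sub_odd hodd odd_one
    rw [heven.neg_one_pow, one_mul]
  set Sq := φ S with hSq
  have hSqskew : Sqᵀ = -Sq := by
    show (φ S)ᵀ = -(φ S)
    have h1 := congrArg φ hSskew
    rw [_root_.map_neg] at h1
    rw [← h1, hφ, RingHom.mapMatrix_apply, RingHom.mapMatrix_apply, Matrix.transpose_map]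
  obtain ⟨t, ht⟩ := skew_det_isSquare (Fintype.card (Fin (p - 1))) (Fin (p - 1)) rfl Sq hSqskew
  have hfactor : Sq = φ M * (A ^ (p - 1) * (A ^ 2 - 1)) := by
    rw [hSq, hS, _root_.map_sub, _root_.map_mul, _root_.map_mul, _root_.map_pow, ← hA]
    have h2 : A ^ (p - 1) * (A ^ 2 - 1) = A - A ^ (p - 1) := by
      rw [mul_sub, mul_one, ← pow_add, show p - 1 + 2 = p + 1 by omega, pow_succ, hAp,
        one_mul]
    rw [h2, mul_sub]
  have hdetM : (φ M).det = (M.det : ℚ) := by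
    rw [hφ, ← RingHom.map_det, eq_intCast]
  have hdA : A.det = 1 := by
    rw [hA, hφ, ← RingHom.map_det, hdetg]
    simp
  have hdetSq : Sq.det = (M.det : ℚ) * p := by
    rw [hfactor, Matrix.det_mul, Matrix.det_mul, Matrix.det_pow, hdet2, hdA, one_pow,
      one_mul, hdetM]
  have htt : (M.det : ℚ) * p = t * t := by rw [← hdetSq, ht]
  have hpQ : (0 : ℚ) < (p : ℚ) := by exact_mod_cast hp.pos
  have hMne : (M.det : ℚ) ≠ 0 := Int.cast_ne_zero.mpr hdet
  have htne : t ≠ 0 := by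
    intro h
    rw [h, mul_zero] at htt
    exact mul_ne_zero hMne (ne_of_gt hpQ) htt
  have hMpos : (0 : ℚ) < (M.det : ℚ) := by
    have h4 : 0 < t * t := mul_self_pos.mpr htne
    nlinarith [htt, hpQ]
  have habs : |(M.det : ℚ)| = (M.det : ℚ) := abs_of_pos hMpos
  obtain ⟨m, hm⟩ := hodd
  refine ⟨t / (p : ℚ) ^ m, ?_⟩
  rw [habs]
  have e1 : ((p : ℚ) ^ m) ^ 2 = (p : ℚ) ^ (p - 2) * (p : ℚ) := by
    rw [← pow_mul, ← pow_succ]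
    congr 1
    omega
  have hkey : (M.det : ℚ) * ((p : ℚ) ^ m) ^ 2 = t ^ 2 * (p : ℚ) ^ (p - 2) := by
    calc (M.det : ℚ) * ((p : ℚ) ^ m) ^ 2 = ((M.det : ℚ) * p) * (p : ℚ) ^ (p - 2) := by
          rw [e1]; ring
    _ = (t * t) * (p : ℚ) ^ (p - 2) := by rw [htt]
    _ = t ^ 2 * (p : ℚ) ^ (p - 2) := by ring
  have hpow1 : ((p : ℚ) ^ (p - 2)) ≠ 0 := by positivity
  have hpow2 : ((p : ℚ) ^ m) ≠ 0 := by positivity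
  field_simp
  linear_combination hkey
end

section
/- Let ζ₅ = e^{2πi/5}, let Λ ⊆ ℂ² be the ℤ-span of the four vectors (1,1), (ζ₅, ζ₅²), (ζ₅², ζ₅⁴), (ζ₅³, ζ₅), and let σ(z,w) = (ζ₅ z, ζ₅² w), so that σ(Λ) = Λ. Then the automorphism of the quotient group ℂ²/Λ induced by σ has exactly 5 fixed points; equivalently, the quotient group Λ/(σ−id)(Λ) has exactly 5 elements. -/
set_option synthInstance.maxHeartbeats 1000000
set_option maxHeartbeats 1000000

noncomputable section

/-- Let `ζ₅ = exp(2πi/5)`, let `Λ` be the `ℤ`-span of `(1,1)`, `(ζ₅,ζ₅²)`, `(ζ₅²,ζ₅⁴)`,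
`(ζ₅³,ζ₅)`, and let `σ(z,w) = (ζ₅z, ζ₅²w)`. Then `(σ - id)(Λ) ⊆ Λ` and the quotient group
`Λ/(σ - id)(Λ)` has exactly 5 elements; equivalently, the automorphism of the torus `ℂ²/Λ`
induced by `σ` has exactly 5 fixed points. -/
theorem stmt_18 (ζ₅ : ℂ) (hζ : ζ₅ = Complex.exp (2 * Real.pi * Complex.I / 5))
    (Λ : Submodule ℤ (ℂ × ℂ))
    (hΛ : Λ = Submodule.span ℤ
        ({((1 : ℂ), (1 : ℂ)), (ζ₅, ζ₅ ^ 2), (ζ₅ ^ 2, ζ₅ ^ 4), (ζ₅ ^ 3, ζ₅)} : Set (ℂ × ℂ)))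
    (σ : (ℂ × ℂ) ≃ₗ[ℂ] (ℂ × ℂ))
    (hσ : ∀ z w : ℂ, σ (z, w) = (ζ₅ * z, ζ₅ ^ 2 * w))
    (f : (ℂ × ℂ) →ₗ[ℤ] (ℂ × ℂ))
    (hf : f = ((σ.restrictScalars ℤ : (ℂ × ℂ) ≃ₗ[ℤ] (ℂ × ℂ)) : (ℂ × ℂ) →ₗ[ℤ] (ℂ × ℂ))
      - LinearMap.id) :
    (∀ x ∈ Λ, f x ∈ Λ) ∧
    ∀ (hmap : ∀ x ∈ Λ, f x ∈ Λ),
      Nat.card (↥Λ ⧸ LinearMap.range (f.restrict hmap)) = 5 := by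
  have hprim : IsPrimitiveRoot ζ₅ 5 := by
    rw [hζ]
    simpa using Complex.isPrimitiveRoot_exp 5 (by norm_num)
  have h5 : ζ₅ ^ 5 = 1 := hprim.pow_eq_one
  have hne1 : ζ₅ ≠ 1 := hprim.ne_one (by norm_num)
  have hsum : 1 + ζ₅ + ζ₅ ^ 2 + ζ₅ ^ 3 + ζ₅ ^ 4 = 0 := by
    have h : (ζ₅ - 1) * (1 + ζ₅ + ζ₅ ^ 2 + ζ₅ ^ 3 + ζ₅ ^ 4) = 0 := by
      linear_combination h5
    rcases mul_eq_zero.mp h with h | h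
    · exact absurd (sub_eq_zero.mp h) hne1
    · exact h
  have hfzw : ∀ z w : ℂ, f (z, w) = (ζ₅ * z - z, ζ₅ ^ 2 * w - w) := by
    intro z w
    rw [hf]
    simp [hσ z w]
  -- membership of generators
  have m0 : ((1:ℂ), (1:ℂ)) ∈ Λ := hΛ ▸ Submodule.subset_span (by simp)
  have m1 : ((ζ₅ : ℂ), ζ₅ ^ 2) ∈ Λ := hΛ ▸ Submodule.subset_span (by simp)
  have m2 : ((ζ₅ ^ 2 : ℂ), ζ₅ ^ 4) ∈ Λ := hΛ ▸ Submodule.subset_span (by simp)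
  have m3 : ((ζ₅ ^ 3 : ℂ), ζ₅) ∈ Λ := hΛ ▸ Submodule.subset_span (by simp)
  have hmap : ∀ x ∈ Λ, f x ∈ Λ := by
    intro x hx
    rw [hΛ] at hx
    induction hx using Submodule.span_induction with
    | mem v hv =>
      rcases hv with rfl | rfl | rfl | rfl
      · have : f ((1:ℂ), (1:ℂ)) = ((ζ₅ : ℂ), ζ₅ ^ 2) - ((1:ℂ), (1:ℂ)) := by
          rw [hfzw]; apply Prod.ext <;> simp <;> ring
        rw [this]; exact sub_mem m1 m0
      · have : f ((ζ₅ : ℂ), ζ₅ ^ 2) = ((ζ₅ ^ 2 : ℂ), ζ₅ ^ 4) - ((ζ₅ : ℂ), ζ₅ ^ 2) := by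
          rw [hfzw]; apply Prod.ext <;> simp <;> ring
        rw [this]; exact sub_mem m2 m1
      · have : f ((ζ₅ ^ 2 : ℂ), ζ₅ ^ 4) = ((ζ₅ ^ 3 : ℂ), ζ₅) - ((ζ₅ ^ 2 : ℂ), ζ₅ ^ 4) := by
          rw [hfzw]; apply Prod.ext <;> simp
          · ring
          · linear_combination ζ₅ * h5
        rw [this]; exact sub_mem m3 m2
      · have : f ((ζ₅ ^ 3 : ℂ), ζ₅) =
            -((((1:ℂ), (1:ℂ)) + ((ζ₅ : ℂ), ζ₅ ^ 2) + ((ζ₅ ^ 2 : ℂ), ζ₅ ^ 4)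
              + ((ζ₅ ^ 3 : ℂ), ζ₅)) + ((ζ₅ ^ 3 : ℂ), ζ₅)) := by
          rw [hfzw]; apply Prod.ext <;> simp
          · linear_combination hsum
          · linear_combination hsum
        rw [this]
        exact neg_mem (add_mem (add_mem (add_mem (add_mem m0 m1) m2) m3) m3)
    | zero => simpa using Λ.zero_mem
    | add x y _ _ hx hy => rw [map_add]; exact add_mem hx hy
    | smul c x _ hx => rw [map_smul]; exact Submodule.smul_mem _ _ hx
  refine ⟨hmap, fun hmap => ?_⟩
  haveI : Fact (Nat.Prime 5) := ⟨by norm_num⟩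
  set K := CyclotomicField 5 ℚ with hK
  haveI : IsCyclotomicExtension {5} ℚ K := CyclotomicField.isCyclotomicExtension 5 ℚ
  haveI : NumberField K := IsCyclotomicExtension.numberField {5} ℚ K
  set η : K := IsCyclotomicExtension.zeta 5 ℚ K with hη_def
  have hη : IsPrimitiveRoot η 5 := IsCyclotomicExtension.zeta_spec 5 ℚ K
  have hmin : minpoly ℚ η = Polynomial.cyclotomic 5 ℚ :=
    (Polynomial.cyclotomic_eq_minpoly_rat hη (by norm_num)).symm
  set pb : PowerBasis ℚ K := hη.powerBasis ℚ with hpb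
  have hpbgen : pb.gen = η := hη.powerBasis_gen ℚ
  have hroot : ∀ {A : Type} [inst : CommRing A] [inst2 : IsDomain A] [inst3 : Algebra ℚ A]
      (x : A), IsPrimitiveRoot x 5 → (Polynomial.aeval x) (minpoly ℚ pb.gen) = 0 := by
    intro A _ _ _ x hx
    rw [hpbgen, hmin, Polynomial.aeval_def, ← Polynomial.eval_map, Polynomial.map_cyclotomic]
    exact hx.isRoot_cyclotomic (by norm_num)
  set ι : K →ₐ[ℚ] ℂ := pb.lift ζ₅ (hroot ζ₅ hprim) with hι_def
  have hι : ι η = ζ₅ := by rw [← hpbgen]; exact pb.lift_gen _ _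
  set ψ : K →ₐ[ℚ] K := pb.lift (η ^ 2) (hroot (η ^ 2) (hη.pow_of_coprime 2 (by decide))) with hψ_def
  have hψ : ψ η = η ^ 2 := by rw [← hpbgen]; exact pb.lift_gen _ _
  set S := NumberField.RingOfIntegers K with hS
  set a : S →+* ℂ := ι.toRingHom.comp (algebraMap S K) with ha_def
  set b : S →+* ℂ := ι.toRingHom.comp (ψ.toRingHom.comp (algebraMap S K)) with hb_def
  set E : S →ₗ[ℤ] ℂ × ℂ :=
    LinearMap.prod a.toAddMonoidHom.toIntLinearMap b.toAddMonoidHom.toIntLinearMap with hE_def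
  have hE : ∀ x : S, E x = (a x, b x) := fun _ => rfl
  set η₀ : S := hη.toInteger with hη₀_def
  have hη₀ : algebraMap S K η₀ = η := rfl
  have haη : ∀ x : S, a x = ι (algebraMap S K x) := fun _ => rfl
  have hbη : ∀ x : S, b x = ι (ψ (algebraMap S K x)) := fun _ => rfl
  have hpow : ∀ n : ℕ, E (η₀ ^ n) = (ζ₅ ^ n, (ζ₅ ^ 2) ^ n) := by
    intro n
    rw [hE, haη, hbη]
    simp only [map_pow, hη₀, hψ, hι]
  have hcomm : ∀ x : S, E ((η₀ - 1) * x) = f (E x) := by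
    intro x
    rw [hE, hE, hfzw]
    have hA : a ((η₀ - 1) * x) = (ζ₅ - 1) * a x := by
      rw [map_mul]; congr 1
      rw [haη]
      simp only [map_sub, map_one, hη₀, hι]
    have hB : b ((η₀ - 1) * x) = (ζ₅ ^ 2 - 1) * b x := by
      rw [map_mul]; congr 1
      rw [hbη]
      simp only [map_sub, map_one, hη₀, hψ, hι, map_pow]
    rw [hA, hB]
    exact Prod.ext (by ring) (by ring)
  have hainj : Function.Injective a := by
    exact ι.toRingHom.injective.comp (NumberField.RingOfIntegers.coe_injective)
  have hEinj : Function.Injective E := by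
    intro x y hxy
    exact hainj (congrArg Prod.fst ((hE x) ▸ (hE y) ▸ hxy))
  set pb₀ := hη.integralPowerBasis with hpb₀
  have hgen₀ : pb₀.gen = η₀ := hη.integralPowerBasis_gen
  have hdim : pb₀.dim = 4 := by
    rw [hη.integralPowerBasis_dim]
    norm_num [Nat.totient_prime]
  have hle : LinearMap.range E ≤ Λ := by
    rw [← Submodule.map_top, ← pb₀.basis.span_eq, Submodule.map_span, Submodule.span_le]
    rintro _ ⟨_, ⟨i, rfl⟩, rfl⟩
    have hb : pb₀.basis i = η₀ ^ (i : ℕ) := by rw [pb₀.basis_eq_pow, hgen₀]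
    have hi : (i : ℕ) < 4 := by have := i.isLt; omega
    rw [hb, hpow]
    interval_cases h : (i : ℕ)
    · simpa using m0
    · simpa using m1
    · have : ((ζ₅ ^ 2) ^ 2 : ℂ) = ζ₅ ^ 4 := by ring
      rw [this]; exact m2
    · have : ((ζ₅ ^ 2) ^ 3 : ℂ) = ζ₅ := by linear_combination ζ₅ * h5
      rw [this]; exact m3
  have hge : Λ ≤ LinearMap.range E := by
    rw [hΛ, Submodule.span_le]
    rintro v (rfl | rfl | rfl | rfl)
    · exact ⟨η₀ ^ 0, by rw [hpow]; norm_num⟩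
    · exact ⟨η₀ ^ 1, by rw [hpow]; norm_num⟩
    · exact ⟨η₀ ^ 2, by rw [hpow]; norm_num; ring⟩
    · exact ⟨η₀ ^ 3, by rw [hpow]; norm_num; linear_combination ζ₅ * h5⟩
  set E₀ : S →ₗ[ℤ] Λ := E.codRestrict Λ (fun x => hle ⟨x, rfl⟩) with hE₀
  have hE₀inj : Function.Injective E₀ := by
    intro x y hxy
    exact hEinj (congrArg Subtype.val hxy)
  have hE₀surj : Function.Surjective E₀ := by
    rintro ⟨v, hv⟩
    obtain ⟨x, hx⟩ := hge hv
    exact ⟨x, Subtype.ext hx⟩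
  set E' : S ≃ₗ[ℤ] Λ := LinearEquiv.ofBijective E₀ ⟨hE₀inj, hE₀surj⟩ with hE'
  have hmapeq : Submodule.map (E' : S →ₗ[ℤ] Λ)
      (Submodule.restrictScalars ℤ (Ideal.span {η₀ - 1}))
      = LinearMap.range (f.restrict hmap) := by
    ext y
    constructor
    · rintro ⟨x, hx, rfl⟩
      rw [SetLike.mem_coe, Submodule.restrictScalars_mem, Ideal.mem_span_singleton'] at hx
      obtain ⟨c, rfl⟩ := hx
      refine ⟨E' c, Subtype.ext ?_⟩
      show f ((E' c : ℂ × ℂ)) = ((E' (c * (η₀ - 1)) : ℂ × ℂ))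
      have h1 : ((E' c : ℂ × ℂ)) = E c := rfl
      have h2 : ((E' (c * (η₀ - 1)) : ℂ × ℂ)) = E (c * (η₀ - 1)) := rfl
      rw [h1, h2, mul_comm, hcomm]
    · rintro ⟨w, rfl⟩
      obtain ⟨x, hx⟩ := hE₀surj w
      refine ⟨x * (η₀ - 1), ?_, Subtype.ext ?_⟩
      · rw [SetLike.mem_coe, Submodule.restrictScalars_mem]
        exact Ideal.mem_span_singleton'.mpr ⟨x, rfl⟩
      · show ((E' (x * (η₀ - 1)) : ℂ × ℂ)) = f (w : ℂ × ℂ)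
        have h2 : ((E' (x * (η₀ - 1)) : ℂ × ℂ)) = E (x * (η₀ - 1)) := rfl
        rw [h2, mul_comm, hcomm]
        congr 1
        rw [← hx]; rfl
  have e1 := Submodule.Quotient.equiv (Submodule.restrictScalars ℤ (Ideal.span {η₀ - 1}))
    (LinearMap.range (f.restrict hmap)) E' hmapeq
  have e2 := Submodule.Quotient.restrictScalarsEquiv ℤ (Ideal.span {η₀ - 1})
  refine (Nat.card_congr e1.toEquiv).symm.trans ((Nat.card_congr e2.toEquiv).trans ?_)
  exact (hη.card_quotient_toInteger_sub_one).trans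
    (by rw [hη.norm_toInteger_sub_one_of_prime_ne_two' (by decide)]; rfl)
end
end
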